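/- arXiv:math/0601177 — 8 statements merged into one kernel-verified Lean document; each statement's English description precedes it below -/
import Mathlib

section
/- Assume that P(I > t) > 0 for every t > 0 and that the tail of I is regularly varying of index −γ for some γ > 0, in the ratio sense: for every c > 0, P(I > ct)/P(I > t) → c^{−γ} as t → +∞. Then P(I_q > t) ≤ P(I > t) for every t, and liminf_{t→+∞} P(I_q > t)/P(I > t) ≥ 1 − e^{−γq}. In particular, for every ε > 0 there exists t_0 such that (1 − e^{−γq} − ε)·P(I > t) ≤ P(I_q > t) ≤ P(I > t) for all t ≥ t_0. -/
open MeasureTheory Filter ProbabilityTheory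

/-- Analytic core: from the key decomposition inequality, nonnegativity, positivity, vanishing
tail and regular variation, deduce the liminf bound and the eventual two-sided bound. -/
private lemma tail_aux (T Tq : ℝ → ℝ) {γ q : ℝ} (hγ : 0 < γ) (hq : 0 < q)
    (T_nonneg : ∀ t, 0 ≤ T t) (Tq_nonneg : ∀ t, 0 ≤ Tq t)
    (Tq_le : ∀ t, Tq t ≤ T t)
    (T_pos : ∀ t : ℝ, 0 < t → 0 < T t)
    (hT0 : Tendsto T atTop (nhds 0))
    (hreg : ∀ c : ℝ, 0 < c → Tendsto (fun t => T (c * t) / T t) atTop (nhds (c ^ (-γ))))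
    (key : ∀ δ : ℝ, 0 < δ → δ < 1 → ∀ t : ℝ,
      T t ≤ Tq ((1 - δ) * t) + T (Real.exp q * ((1 - δ) * t))
        + T (Real.exp q * (δ * t)) * Tq (δ * t)) :
    (1 - Real.exp (-(γ * q)) ≤ liminf (fun t => Tq t / T t) atTop) ∧
    (∀ ε : ℝ, 0 < ε → ∃ t₀ : ℝ, ∀ t : ℝ, t₀ ≤ t →
      (1 - Real.exp (-(γ * q)) - ε) * T t ≤ Tq t ∧ Tq t ≤ T t) := by
  set r : ℝ → ℝ := fun t => Tq t / T t with hrdef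
  have r_nonneg : ∀ t, 0 ≤ r t := fun t => div_nonneg (Tq_nonneg t) (T_nonneg t)
  have r_le_one : ∀ t, r t ≤ 1 := by
    intro t
    rcases (T_nonneg t).eq_or_lt with h | h
    · have hq0 : Tq t = 0 := le_antisymm (h ▸ Tq_le t) (Tq_nonneg t)
      simp [hrdef, hq0]
    · exact (div_le_one h).2 (Tq_le t)
  have Hδ : ∀ δ : ℝ, 0 < δ → δ < 1 →
      (1 - δ) ^ γ - Real.exp (-(γ * q)) ≤ liminf r atTop := by
    intro δ h0 h1
    have h1δ : (0 : ℝ) < 1 - δ := by linarith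
    have hc₁ : (0 : ℝ) < (1 - δ)⁻¹ := inv_pos.2 h1δ
    have hc₄ : (0 : ℝ) < δ * (1 - δ)⁻¹ := mul_pos h0 hc₁
    have hc₃ : (0 : ℝ) < Real.exp q * (δ * (1 - δ)⁻¹) := mul_pos (Real.exp_pos q) hc₄
    have hT4 : Tendsto (fun s : ℝ => T ((δ * (1 - δ)⁻¹) * s)) atTop (nhds 0) :=
      hT0.comp (tendsto_id.const_mul_atTop hc₄)
    have hF : Tendsto (fun s : ℝ => T ((1 - δ)⁻¹ * s) / T s - T (Real.exp q * s) / T s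
        - (T ((Real.exp q * (δ * (1 - δ)⁻¹)) * s) / T s) * T ((δ * (1 - δ)⁻¹) * s)) atTop
        (nhds (((1 - δ)⁻¹) ^ (-γ) - Real.exp q ^ (-γ)
          - (Real.exp q * (δ * (1 - δ)⁻¹)) ^ (-γ) * 0)) :=
      ((hreg _ hc₁).sub (hreg _ (Real.exp_pos q))).sub ((hreg _ hc₃).mul hT4)
    have hBval : ((1 - δ)⁻¹) ^ (-γ) - Real.exp q ^ (-γ)
        - (Real.exp q * (δ * (1 - δ)⁻¹)) ^ (-γ) * 0
        = (1 - δ) ^ γ - Real.exp (-(γ * q)) := by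
      rw [mul_zero, sub_zero, Real.inv_rpow h1δ.le, Real.rpow_neg h1δ.le, inv_inv,
        ← Real.exp_mul, show q * -γ = -(γ * q) by ring]
    rw [hBval] at hF
    have hFle : ∀ᶠ s in atTop, (fun s : ℝ => T ((1 - δ)⁻¹ * s) / T s - T (Real.exp q * s) / T s
        - (T ((Real.exp q * (δ * (1 - δ)⁻¹)) * s) / T s) * T ((δ * (1 - δ)⁻¹) * s)) s ≤ r s := by
      filter_upwards [eventually_gt_atTop (0 : ℝ)] with s hs
      have hTs : 0 < T s := T_pos s hs
      have hk := key δ h0 h1 ((1 - δ)⁻¹ * s)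
      rw [show (1 - δ) * ((1 - δ)⁻¹ * s) = s by field_simp] at hk
      rw [show Real.exp q * (δ * ((1 - δ)⁻¹ * s)) = (Real.exp q * (δ * (1 - δ)⁻¹)) * s by ring]
        at hk
      rw [show δ * ((1 - δ)⁻¹ * s) = (δ * (1 - δ)⁻¹) * s by ring] at hk
      have hmono := mul_le_mul_of_nonneg_left (Tq_le ((δ * (1 - δ)⁻¹) * s))
        (T_nonneg ((Real.exp q * (δ * (1 - δ)⁻¹)) * s))
      have hnum : T ((1 - δ)⁻¹ * s) - T (Real.exp q * s)
          - T ((Real.exp q * (δ * (1 - δ)⁻¹)) * s) * T ((δ * (1 - δ)⁻¹) * s) ≤ Tq s := by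
        linarith
      have heq : T ((1 - δ)⁻¹ * s) / T s - T (Real.exp q * s) / T s
          - (T ((Real.exp q * (δ * (1 - δ)⁻¹)) * s) / T s) * T ((δ * (1 - δ)⁻¹) * s)
          = (T ((1 - δ)⁻¹ * s) - T (Real.exp q * s)
            - T ((Real.exp q * (δ * (1 - δ)⁻¹)) * s) * T ((δ * (1 - δ)⁻¹) * s)) / T s := by
        field_simp
      show _ ≤ Tq s / T s
      rw [heq]
      exact (div_le_div_iff_of_pos_right hTs).2 hnum
    calc (1 - δ) ^ γ - Real.exp (-(γ * q))
        = liminf (fun s : ℝ => T ((1 - δ)⁻¹ * s) / T s - T (Real.exp q * s) / T s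
          - (T ((Real.exp q * (δ * (1 - δ)⁻¹)) * s) / T s) * T ((δ * (1 - δ)⁻¹) * s)) atTop :=
          (hF.liminf_eq).symm
      _ ≤ liminf r atTop := liminf_le_liminf hFle hF.isBoundedUnder_ge
          (Filter.IsBoundedUnder.isCoboundedUnder_ge
            (isBoundedUnder_of ⟨1, fun t => r_le_one t⟩))
  have part2 : 1 - Real.exp (-(γ * q)) ≤ liminf r atTop := by
    refine le_of_forall_sub_le fun ε hε => ?_
    have hcont : ContinuousAt (fun x : ℝ => x ^ γ) 1 :=
      Real.continuousAt_rpow_const 1 γ (Or.inl one_ne_zero)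
    have h2 : Tendsto (fun δ : ℝ => (1 - δ) ^ γ) (nhdsWithin 0 (Set.Ioi 0)) (nhds 1) := by
      have h3 : Tendsto (fun δ : ℝ => 1 - δ) (nhdsWithin (0 : ℝ) (Set.Ioi 0)) (nhds 1) := by
        have h4 : Tendsto (fun δ : ℝ => 1 - δ) (nhds (0 : ℝ)) (nhds 1) := by
          simpa [Pi.sub_def] using (continuous_const.sub continuous_id).tendsto (0 : ℝ)
        exact h4.mono_left nhdsWithin_le_nhds
      simpa [Real.one_rpow, Function.comp_def] using hcont.tendsto.comp h3
    have hev1 : ∀ᶠ δ in nhdsWithin (0 : ℝ) (Set.Ioi 0), 1 - ε < (1 - δ) ^ γ :=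
      h2.eventually (eventually_gt_nhds (by linarith))
    have hev2 : ∀ᶠ δ in nhdsWithin (0 : ℝ) (Set.Ioi 0), δ < 1 :=
      eventually_nhdsWithin_of_eventually_nhds (eventually_lt_nhds one_pos)
    obtain ⟨δ, hδε, hδ1, hδ0⟩ := (hev1.and (hev2.and self_mem_nhdsWithin)).exists
    have := Hδ δ (Set.mem_Ioi.1 hδ0) hδ1
    linarith
  refine ⟨part2, fun ε hε => ?_⟩
  have hlt : 1 - Real.exp (-(γ * q)) - ε < liminf r atTop :=
    lt_of_lt_of_le (by linarith) part2
  have hev := eventually_lt_of_lt_liminf hlt (isBoundedUnder_of ⟨0, fun t => r_nonneg t⟩)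
  obtain ⟨t₁, ht₁⟩ := eventually_atTop.1 hev
  refine ⟨max t₁ 1, fun t ht => ?_⟩
  have htpos : (0 : ℝ) < t := lt_of_lt_of_le one_pos (le_trans (le_max_right _ _) ht)
  have hTs : 0 < T t := T_pos t htpos
  have hrt := ht₁ t (le_trans (le_max_left _ _) ht)
  refine ⟨?_, Tq_le t⟩
  simp only [hrdef] at hrt
  have hmul : (1 - Real.exp (-(γ * q)) - ε) * T t ≤ (Tq t / T t) * T t :=
    mul_le_mul_of_nonneg_right hrt.le (T_nonneg t)
  rwa [div_mul_cancel₀ _ hTs.ne'] at hmul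

/-- If the tail of `I` is regularly varying of index `-γ` in the ratio sense, then
`P(I_q > t) ≤ P(I > t)` for every `t`, `liminf P(I_q > t)/P(I > t) ≥ 1 - e^{-γq}`, and for every
`ε > 0` there is `t₀` with `(1 - e^{-γq} - ε) P(I > t) ≤ P(I_q > t) ≤ P(I > t)` for `t ≥ t₀`. -/
theorem trunc_tail_equiv_regular
    {Ω : Type*} [MeasurableSpace Ω] (P : Measure Ω) [IsProbabilityMeasure P]
    (q : ℝ) (hq : 0 < q)
    (I Iq I' : Ω → ℝ)
    (hI : Measurable I) (hIq : Measurable Iq) (hI' : Measurable I')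
    (hI_nn : ∀ ω, 0 ≤ I ω) (hIq_nn : ∀ ω, 0 ≤ Iq ω) (hI'_nn : ∀ ω, 0 ≤ I' ω)
    (hindep : IndepFun I' Iq P)
    (hident : IdentDistrib I' I P P)
    (hdom : ∀ᵐ ω ∂P, Iq ω ≤ I ω ∧ I ω ≤ Iq ω + Real.exp (-q) * I' ω)
    (hpos : ∀ t : ℝ, 0 < t → 0 < P {ω | t < I ω})
    (γ : ℝ) (hγ : 0 < γ)
    (hreg : ∀ c : ℝ, 0 < c → Tendsto (fun t : ℝ =>
        (P {ω | c * t < I ω}).toReal / (P {ω | t < I ω}).toReal) atTop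
        (nhds (c ^ (-γ)))) :
    (∀ t : ℝ, P {ω | t < Iq ω} ≤ P {ω | t < I ω}) ∧
    (1 - Real.exp (-(γ * q)) ≤ liminf (fun t : ℝ =>
        (P {ω | t < Iq ω}).toReal / (P {ω | t < I ω}).toReal) atTop) ∧
    (∀ ε : ℝ, 0 < ε → ∃ t₀ : ℝ, ∀ t : ℝ, t₀ ≤ t →
      (1 - Real.exp (-(γ * q)) - ε) * (P {ω | t < I ω}).toReal ≤
        (P {ω | t < Iq ω}).toReal ∧
      (P {ω | t < Iq ω}).toReal ≤ (P {ω | t < I ω}).toReal) := by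
  have hne : ∀ s : Set Ω, P s ≠ ⊤ := fun s => measure_ne_top P s
  -- Part 1
  have part1 : ∀ t : ℝ, P {ω | t < Iq ω} ≤ P {ω | t < I ω} := by
    intro t
    refine measure_mono_ae ?_
    filter_upwards [hdom] with ω h hω
    exact lt_of_lt_of_le hω h.1
  -- tail of I tends to 0
  have hT0 : Tendsto (fun t : ℝ => (P {ω | t < I ω}).toReal) atTop (nhds 0) := by
    have hmeas : ∀ n : ℕ, MeasurableSet {ω | (n : ℝ) < I ω} := fun n =>
      measurableSet_lt measurable_const hI
    have hanti : Antitone fun n : ℕ => {ω | (n : ℝ) < I ω} := by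
      intro a b hab ω hω
      simp only [Set.mem_setOf_eq] at hω ⊢
      exact lt_of_le_of_lt (by exact_mod_cast hab) hω
    have h0 := tendsto_measure_iInter_atTop (μ := P)
      (fun n => (hmeas n).nullMeasurableSet) hanti ⟨0, hne _⟩
    have hempty : (⋂ n : ℕ, {ω | (n : ℝ) < I ω}) = ∅ := by
      ext ω
      simp only [Set.mem_iInter, Set.mem_setOf_eq, Set.mem_empty_iff_false, iff_false,
        not_forall, not_lt]
      obtain ⟨n, hn⟩ := exists_nat_gt (I ω)
      exact ⟨n, hn.le⟩
    rw [hempty, measure_empty] at h0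
    have h1 : Tendsto (fun n : ℕ => (P {ω | (n : ℝ) < I ω}).toReal) atTop (nhds 0) := by
      have := (ENNReal.tendsto_toReal (by simp)).comp h0
      simpa [Function.comp_def] using this
    have h2 : Tendsto (fun t : ℝ => (P {ω | ((⌊t⌋₊ : ℕ) : ℝ) < I ω}).toReal) atTop (nhds 0) :=
      h1.comp tendsto_nat_floor_atTop
    refine tendsto_of_tendsto_of_tendsto_of_le_of_le' tendsto_const_nhds h2 ?_ ?_
    · filter_upwards with t
      exact ENNReal.toReal_nonneg
    · filter_upwards [eventually_ge_atTop (0 : ℝ)] with t ht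
      refine ENNReal.toReal_mono (hne _) (measure_mono fun ω hω => ?_)
      exact lt_of_le_of_lt (Nat.floor_le ht) hω
  -- conversion helper
  have hconv : ∀ x s : ℝ, s < Real.exp (-q) * x → Real.exp q * s < x := by
    intro x s h
    have h2 := mul_lt_mul_of_pos_left h (Real.exp_pos q)
    rwa [← mul_assoc, ← Real.exp_add, add_neg_cancel, Real.exp_zero, one_mul] at h2
  -- key inequality at the level of measures
  have keyE : ∀ δ : ℝ, 0 < δ → δ < 1 → ∀ t : ℝ,
      P {ω | t < I ω} ≤ P {ω | (1 - δ) * t < Iq ω}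
        + (P {ω | Real.exp q * ((1 - δ) * t) < I ω}
        + P {ω | Real.exp q * (δ * t) < I ω} * P {ω | δ * t < Iq ω}) := by
    intro δ h0 h1 t
    have hsub : {ω | t < I ω} ≤ᵐ[P] (({ω | (1 - δ) * t < Iq ω}
        ∪ (I' ⁻¹' Set.Ioi (Real.exp q * ((1 - δ) * t))
        ∪ (I' ⁻¹' Set.Ioi (Real.exp q * (δ * t)) ∩ Iq ⁻¹' Set.Ioi (δ * t))) : Set Ω)) := by
      filter_upwards [hdom] with ω hω hmem
      have ht : t < I ω := hmem
      have hexp : (1 - δ) * t = t - δ * t := by ring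
      by_cases hA : (1 - δ) * t < Iq ω
      · exact Or.inl hA
      push_neg at hA
      by_cases hB : (1 - δ) * t < Real.exp (-q) * I' ω
      · exact Or.inr (Or.inl (hconv _ _ hB))
      push_neg at hB
      refine Or.inr (Or.inr ⟨hconv _ _ ?_, ?_⟩)
      · have h2 := hω.2
        rw [hexp] at hA
        linarith
      · show δ * t < Iq ω
        have h2 := hω.2
        rw [hexp] at hB
        linarith
    calc P {ω | t < I ω}
        ≤ P ({ω | (1 - δ) * t < Iq ω}
          ∪ (I' ⁻¹' Set.Ioi (Real.exp q * ((1 - δ) * t))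
          ∪ (I' ⁻¹' Set.Ioi (Real.exp q * (δ * t)) ∩ Iq ⁻¹' Set.Ioi (δ * t)))) :=
          measure_mono_ae hsub
      _ ≤ P {ω | (1 - δ) * t < Iq ω}
          + P (I' ⁻¹' Set.Ioi (Real.exp q * ((1 - δ) * t))
          ∪ (I' ⁻¹' Set.Ioi (Real.exp q * (δ * t)) ∩ Iq ⁻¹' Set.Ioi (δ * t))) :=
          measure_union_le _ _
      _ ≤ P {ω | (1 - δ) * t < Iq ω}
          + (P (I' ⁻¹' Set.Ioi (Real.exp q * ((1 - δ) * t)))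
          + P (I' ⁻¹' Set.Ioi (Real.exp q * (δ * t)) ∩ Iq ⁻¹' Set.Ioi (δ * t))) :=
          add_le_add le_rfl (measure_union_le _ _)
      _ = P {ω | (1 - δ) * t < Iq ω}
          + (P {ω | Real.exp q * ((1 - δ) * t) < I ω}
          + P {ω | Real.exp q * (δ * t) < I ω} * P {ω | δ * t < Iq ω}) := by
          rw [hindep.measure_inter_preimage_eq_mul _ _ measurableSet_Ioi measurableSet_Ioi,
            hident.measure_mem_eq (s := Set.Ioi (Real.exp q * ((1 - δ) * t))) measurableSet_Ioi,
            hident.measure_mem_eq (s := Set.Ioi (Real.exp q * (δ * t))) measurableSet_Ioi]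
          rfl
  -- key inequality in real numbers
  have key : ∀ δ : ℝ, 0 < δ → δ < 1 → ∀ t : ℝ,
      (P {ω | t < I ω}).toReal ≤ (P {ω | (1 - δ) * t < Iq ω}).toReal
        + (P {ω | Real.exp q * ((1 - δ) * t) < I ω}).toReal
        + (P {ω | Real.exp q * (δ * t) < I ω}).toReal * (P {ω | δ * t < Iq ω}).toReal := by
    intro δ h0 h1 t
    have h := keyE δ h0 h1 t
    have h2 := ENNReal.toReal_mono
      (ENNReal.add_ne_top.2 ⟨hne _, ENNReal.add_ne_top.2 ⟨hne _,
        ENNReal.mul_ne_top (hne _) (hne _)⟩⟩) h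
    rw [ENNReal.toReal_add (hne _) (ENNReal.add_ne_top.2 ⟨hne _,
        ENNReal.mul_ne_top (hne _) (hne _)⟩),
      ENNReal.toReal_add (hne _) (ENNReal.mul_ne_top (hne _) (hne _)),
      ENNReal.toReal_mul] at h2
    linarith
  obtain ⟨p2, p3⟩ := tail_aux (fun t : ℝ => (P {ω | t < I ω}).toReal)
    (fun t : ℝ => (P {ω | t < Iq ω}).toReal) hγ hq
    (fun t => ENNReal.toReal_nonneg) (fun t => ENNReal.toReal_nonneg)
    (fun t => ENNReal.toReal_mono (hne _) (part1 t))
    (fun t ht => ENNReal.toReal_pos (hpos t ht).ne' (hne _))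
    hT0 hreg key
  exact ⟨part1, p2, p3⟩
end

section
/- Let I be an almost surely strictly positive real random variable, let f : (0,∞) → [0,∞) be nondecreasing, and let r > 1. Then, as an identity in [0,+∞], ∫_1^∞ P(r^{−t} ≤ f(r^{−t}·I)) dt = (1/log r) · ∫_0^∞ P(s ≤ f(s)·I and r·s < I) · s^{−1} ds. -/
open MeasureTheory Filter Set

/-- One-dimensional change of variables for the Lebesgue integral with values in `ℝ≥0∞`. -/
lemma lintegral_image_eq_lintegral_abs_deriv_mul' {s : Set ℝ} {φ φ' : ℝ → ℝ}
    (hs : MeasurableSet s) (hφ' : ∀ x ∈ s, HasDerivWithinAt φ (φ' x) s x)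
    (hφ : InjOn φ s) (g : ℝ → ENNReal) :
    ∫⁻ x in φ '' s, g x = ∫⁻ x in s, ENNReal.ofReal |φ' x| * g (φ x) := by
  simpa only [ContinuousLinearMap.det_toSpanSingleton] using
    lintegral_image_eq_lintegral_abs_det_fderiv_mul volume hs
      (fun x hx => (hφ' x hx).hasFDerivWithinAt) hφ g

/-- Change-of-variables identity
`∫_1^∞ P(r^{-t} ≤ f(r^{-t} I)) dt = (1/log r) ∫_0^∞ P(s ≤ f(s) I, rs < I) s⁻¹ ds`. -/
theorem change_of_variables_at_zero
    {Ω : Type*} [MeasurableSpace Ω] (ℙ : Measure Ω) [IsProbabilityMeasure ℙ]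
    (I : Ω → ℝ) (hI : Measurable I) (hIpos : ∀ᵐ ω ∂ℙ, 0 < I ω)
    (f : ℝ → ℝ) (hf_nn : ∀ s : ℝ, 0 < s → 0 ≤ f s) (hf_mono : MonotoneOn f (Ioi 0))
    (r : ℝ) (hr : 1 < r) :
    ∫⁻ t in Ioi (1 : ℝ), ℙ {ω | r ^ (-t) ≤ f (r ^ (-t) * I ω)} =
      ENNReal.ofReal (1 / Real.log r) *
        ∫⁻ s in Ioi (0 : ℝ),
          ℙ {ω | s ≤ f s * I ω ∧ r * s < I ω} * ENNReal.ofReal s⁻¹ := by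
  have hr0 : (0:ℝ) < r := lt_trans one_pos hr
  have hL : 0 < Real.log r := Real.log_pos hr
  set L := Real.log r with hLdef
  -- Extend `f` to a monotone (hence measurable) function on all of `ℝ`.
  set F : ℝ → ℝ := fun x => if 0 < x then f x else 0 with hF
  have hFf : ∀ x : ℝ, 0 < x → F x = f x := fun x hx => if_pos hx
  have hFmono : Monotone F := by
    intro x y hxy
    by_cases hx : 0 < x
    · simp only [hF, if_pos hx, if_pos (hx.trans_le hxy)]
      exact hf_mono hx (hx.trans_le hxy) hxy
    · by_cases hy : 0 < y
      · simp only [hF, if_neg hx, if_pos hy]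
        exact hf_nn y hy
      · simp only [hF, if_neg hx, if_neg hy, le_refl]
  have hFmeas : Measurable F := hFmono.measurable
  have hrt : ∀ t : ℝ, 0 < r ^ (-t) := fun t => Real.rpow_pos_of_pos hr0 _
  have hmrpow : Measurable fun x : ℝ => r ^ x := by
    have h : (fun x : ℝ => r ^ x) = fun x : ℝ => Real.exp (L * x) :=
      funext fun x => Real.rpow_def_of_pos hr0 x
    rw [h]
    exact Real.measurable_exp.comp (measurable_id.const_mul L)
  -- product sets
  set Sset : Set (ℝ × Ω) := {p | r ^ (-p.1) ≤ F (r ^ (-p.1) * I p.2)} with hSdef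
  set Tset : Set (ℝ × Ω) := {p | p.1 ≤ F p.1 * I p.2 ∧ r * p.1 < I p.2} with hTdef
  have hrtm : Measurable fun p : ℝ × Ω => r ^ (-p.1) := hmrpow.comp measurable_fst.neg
  have hmS : MeasurableSet Sset :=
    measurableSet_le hrtm (hFmeas.comp (hrtm.mul (hI.comp measurable_snd)))
  have hmT : MeasurableSet Tset :=
    (measurableSet_le measurable_fst
        ((hFmeas.comp measurable_fst).mul (hI.comp measurable_snd))).inter
      (measurableSet_lt (measurable_fst.const_mul r) (hI.comp measurable_snd))
  -- the pointwise (per `ω`) substitution identity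
  have key : ∀ c : ℝ, 0 < c →
      (∫⁻ t in Ioi (1:ℝ), {t : ℝ | r ^ (-t) ≤ F (r ^ (-t) * c)}.indicator 1 t)
        = ENNReal.ofReal (1/L) * ∫⁻ s in Ioi (0:ℝ),
            {s : ℝ | s ≤ F s * c ∧ r * s < c}.indicator (fun s => ENNReal.ofReal s⁻¹) s := by
    intro c hc
    set φ : ℝ → ℝ := fun t => c * r ^ (-t) with hφdef
    have hφpos : ∀ t, 0 < φ t := fun t => mul_pos hc (hrt t)
    set A : Set ℝ := {s : ℝ | s ≤ F s * c} with hA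
    have hAm : MeasurableSet A := measurableSet_le measurable_id (hFmeas.mul_const c)
    have hφm : Measurable φ := (hmrpow.comp measurable_neg).const_mul c
    have hs' : MeasurableSet (Ioi (1:ℝ) ∩ φ ⁻¹' A) := measurableSet_Ioi.inter (hφm hAm)
    -- derivative of φ
    have hd : ∀ t : ℝ, HasDerivAt φ (-(φ t * L)) t := by
      intro t
      have h1 : HasDerivAt (fun u : ℝ => r ^ u) (r ^ (-t) * L) (-t) :=
        (Real.hasStrictDerivAt_const_rpow hr0 (-t)).hasDerivAt
      have h2 := h1.comp t (hasDerivAt_neg t)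
      have h3 := h2.const_mul c
      convert h3 using 1
      show -(c * r ^ (-t) * L) = _
      ring
      all_goals rfl
    -- φ is strictly antitone, hence injective
    have hanti : StrictAnti φ := by
      intro t u htu
      have h1 : r ^ (-u) < r ^ (-t) := by
        rw [Real.rpow_lt_rpow_left_iff hr]
        linarith
      exact mul_lt_mul_of_pos_left h1 hc
    -- image of (1, ∞) under φ
    have himg : φ '' Ioi (1:ℝ) = Ioo 0 (c/r) := by
      ext s
      constructor
      · rintro ⟨t, ht, rfl⟩
        refine ⟨hφpos t, ?_⟩
        have h1 : r ^ (-t) < r ^ (-1:ℝ) := by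
          rw [Real.rpow_lt_rpow_left_iff hr]
          simpa using ht
        have h2 := mul_lt_mul_of_pos_left h1 hc
        simpa [Real.rpow_neg_one, div_eq_mul_inv] using h2
      · rintro ⟨hs0, hsr⟩
        refine ⟨Real.log (c/s) / L, ?_, ?_⟩
        · rw [mem_Ioi, lt_div_iff₀ hL]
          have h1 : r < c / s := by
            rw [lt_div_iff₀ hs0]
            have h2 := (lt_div_iff₀ hr0).1 hsr
            linarith [mul_comm r s]
          simpa [hLdef] using Real.log_lt_log hr0 h1
        · have hcs : 0 < c / s := div_pos hc hs0
          have h3 : r ^ (-(Real.log (c/s) / L)) = s / c := by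
            rw [Real.rpow_def_of_pos hr0]
            rw [show L * -(Real.log (c/s) / L) = -Real.log (c/s) by
              field_simp]
            rw [Real.exp_neg, Real.exp_log hcs]
            field_simp
          simp only [hφdef, h3]
          field_simp
    have himg' : φ '' (Ioi (1:ℝ) ∩ φ ⁻¹' A) = Ioo 0 (c/r) ∩ A := by
      rw [Set.image_inter_preimage, himg]
    -- identification of the two relevant sets
    have hcond : ∀ t : ℝ, (r ^ (-t) ≤ F (r ^ (-t) * c)) ↔ φ t ∈ A := by
      intro t
      simp only [hA, mem_setOf_eq, hφdef, mul_comm c (r ^ (-t))]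
      constructor
      · intro h; exact mul_le_mul_of_nonneg_right h hc.le
      · intro h; exact le_of_mul_le_mul_right h hc
    have hSA : Ioi (1:ℝ) ∩ {t : ℝ | r ^ (-t) ≤ F (r ^ (-t) * c)} = Ioi (1:ℝ) ∩ φ ⁻¹' A := by
      ext t
      simp only [mem_inter_iff, mem_setOf_eq, mem_preimage]
      exact and_congr_right fun _ => hcond t
    have hTA : Ioi (0:ℝ) ∩ {s : ℝ | s ≤ F s * c ∧ r * s < c} = Ioo 0 (c/r) ∩ A := by
      ext s
      simp only [mem_inter_iff, mem_Ioi, mem_setOf_eq, mem_Ioo, hA]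
      constructor
      · rintro ⟨hs, h1, h2⟩
        refine ⟨⟨hs, ?_⟩, h1⟩
        rw [lt_div_iff₀ hr0, mul_comm]
        exact h2
      · rintro ⟨⟨hs, h2⟩, h1⟩
        refine ⟨hs, h1, ?_⟩
        rw [lt_div_iff₀ hr0] at h2
        linarith [mul_comm s r]
    -- measurability of the sections
    have hSm : MeasurableSet {t : ℝ | r ^ (-t) ≤ F (r ^ (-t) * c)} := by
      have h1 : Measurable fun t : ℝ => r ^ (-t) := hmrpow.comp measurable_neg
      exact measurableSet_le h1 (hFmeas.comp (h1.mul_const c))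
    have hTm : MeasurableSet {s : ℝ | s ≤ F s * c ∧ r * s < c} :=
      (measurableSet_le measurable_id (hFmeas.mul_const c)).inter
        (measurableSet_lt (measurable_id.const_mul r) measurable_const)
    -- rewrite both sides as set integrals
    rw [← lintegral_indicator measurableSet_Ioi, Set.indicator_indicator,
      lintegral_indicator (measurableSet_Ioi.inter hSm), hSA]
    simp only [Pi.one_apply]
    rw [setLIntegral_one]
    rw [← lintegral_indicator measurableSet_Ioi, Set.indicator_indicator,
      lintegral_indicator (measurableSet_Ioi.inter hTm), hTA, ← himg']
    rw [lintegral_image_eq_lintegral_abs_deriv_mul' hs'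
      (fun t _ => (hd t).hasDerivWithinAt) (hanti.injective.injOn.mono inter_subset_left) _]
    have hpt : ∀ t : ℝ, ENNReal.ofReal (1/L) *
        (ENNReal.ofReal |(-(φ t * L))| * ENNReal.ofReal (φ t)⁻¹) = 1 := by
      intro t
      rw [abs_neg, abs_of_pos (mul_pos (hφpos t) hL),
        ← ENNReal.ofReal_mul (mul_pos (hφpos t) hL).le,
        ← ENNReal.ofReal_mul (by positivity)]
      rw [show 1/L * (φ t * L * (φ t)⁻¹) = 1 by
        field_simp
        exact div_self (hφpos t).ne']
      exact ENNReal.ofReal_one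
    calc volume (Ioi (1:ℝ) ∩ φ ⁻¹' A)
        = ∫⁻ _ in Ioi (1:ℝ) ∩ φ ⁻¹' A, (1:ENNReal) := (setLIntegral_one _).symm
      _ = ∫⁻ t in Ioi (1:ℝ) ∩ φ ⁻¹' A, ENNReal.ofReal (1/L) *
            (ENNReal.ofReal |(-(φ t * L))| * ENNReal.ofReal (φ t)⁻¹) := by
          refine setLIntegral_congr_fun hs' (fun t _ => ?_)
          exact (hpt t).symm
      _ = ENNReal.ofReal (1/L) * ∫⁻ t in Ioi (1:ℝ) ∩ φ ⁻¹' A,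
            ENNReal.ofReal |(-(φ t * L))| * ENNReal.ofReal (φ t)⁻¹ := by
          rw [lintegral_const_mul' _ _ ENNReal.ofReal_ne_top]
  -- Now the Tonelli argument.
  have hLHS : ∫⁻ t in Ioi (1 : ℝ), ℙ {ω | r ^ (-t) ≤ f (r ^ (-t) * I ω)}
      = ∫⁻ ω, (∫⁻ t in Ioi (1:ℝ), Sset.indicator 1 (t, ω)) ∂ℙ := by
    rw [← lintegral_lintegral_swap]
    · refine setLIntegral_congr_fun measurableSet_Ioi (fun t _ => ?_)
      have hsec : MeasurableSet {ω | (t, ω) ∈ Sset} := measurable_prodMk_left hmS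
      have h1 : ℙ {ω | r ^ (-t) ≤ f (r ^ (-t) * I ω)} = ℙ {ω | (t, ω) ∈ Sset} := by
        refine measure_congr ?_
        rw [eventuallyEq_set]
        filter_upwards [hIpos] with ω hω
        have hx : 0 < r ^ (-t) * I ω := mul_pos (hrt t) hω
        simp [hSdef, hFf _ hx]
      rw [h1, ← lintegral_indicator_one hsec]
      refine lintegral_congr fun ω => ?_
      simp [Set.indicator_apply]
    · exact ((measurable_one.indicator hmS).comp
        (measurable_fst.prodMk measurable_snd)).aemeasurable
  have hRHS : ∫⁻ s in Ioi (0 : ℝ), ℙ {ω | s ≤ f s * I ω ∧ r * s < I ω} * ENNReal.ofReal s⁻¹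
      = ∫⁻ ω, (∫⁻ s in Ioi (0:ℝ),
          Tset.indicator (fun p : ℝ × Ω => ENNReal.ofReal p.1⁻¹) (s, ω)) ∂ℙ := by
    rw [← lintegral_lintegral_swap]
    · refine setLIntegral_congr_fun measurableSet_Ioi (fun s hs => ?_)
      have hsec : MeasurableSet {ω | (s, ω) ∈ Tset} := measurable_prodMk_left hmT
      have h1 : {ω | s ≤ f s * I ω ∧ r * s < I ω} = {ω | (s, ω) ∈ Tset} := by
        ext ω
        simp [hTdef, hFf s hs]
      rw [h1, mul_comm (ℙ {ω | (s, ω) ∈ Tset}) (ENNReal.ofReal s⁻¹),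
        ← lintegral_indicator_const hsec]
      refine lintegral_congr fun ω => ?_
      simp [Set.indicator_apply]
    · exact ((measurable_fst.inv.ennreal_ofReal.indicator hmT).comp
        (measurable_fst.prodMk measurable_snd)).aemeasurable
  rw [hLHS, hRHS, ← lintegral_const_mul' _ _ ENNReal.ofReal_ne_top]
  refine lintegral_congr_ae ?_
  filter_upwards [hIpos] with ω hω
  have h1 : (∫⁻ t in Ioi (1:ℝ), Sset.indicator 1 (t, ω))
      = ∫⁻ t in Ioi (1:ℝ), {t : ℝ | r ^ (-t) ≤ F (r ^ (-t) * I ω)}.indicator 1 t := by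
    refine lintegral_congr fun t => ?_
    simp [Set.indicator_apply, hSdef]
  have h2 : (∫⁻ s in Ioi (0:ℝ), Tset.indicator (fun p : ℝ × Ω => ENNReal.ofReal p.1⁻¹) (s, ω))
      = ∫⁻ s in Ioi (0:ℝ),
          {s : ℝ | s ≤ F s * I ω ∧ r * s < I ω}.indicator (fun s => ENNReal.ofReal s⁻¹) s := by
    refine lintegral_congr fun s => ?_
    simp [Set.indicator_apply, hTdef]
  rw [h1, h2]
  exact key (I ω) hω
end

section
/- Let I be an almost surely strictly positive real random variable, let f : (0,∞) → [0,∞) be nondecreasing, and let r > 1. Then ∑_{n=1}^∞ P(r^{−n} ≤ f(r^{−(n+1)}·I)) ≤ (1/log r) · ∫_0^∞ P(s ≤ f(s)·I and r·s < I) · s^{−1} ds ≤ ∑_{n=1}^∞ P(r^{−(n+1)} ≤ f(r^{−n}·I)), as inequalities in [0,+∞]. -/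
open MeasureTheory Filter Set

lemma lint_inv_Ioc {a b : ℝ} (ha : 0 < a) (hab : a ≤ b) :
    ∫⁻ s in Set.Ioc a b, ENNReal.ofReal s⁻¹ = ENNReal.ofReal (Real.log (b / a)) := by
  have h0 : (0:ℝ) ∉ Set.uIcc a b := by
    rw [Set.mem_uIcc]; push_neg
    constructor <;> intro h <;> linarith
  have hint : IntervalIntegrable (fun s : ℝ => s⁻¹) volume a b := by
    apply intervalIntegral.intervalIntegrable_inv
    · intro x hx h; exact h0 (h ▸ hx)
    · exact continuousOn_id
  have hi : IntegrableOn (fun s : ℝ => s⁻¹) (Set.Ioc a b) volume := by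
    rwa [← intervalIntegrable_iff_integrableOn_Ioc_of_le hab]
  rw [← ofReal_integral_eq_lintegral_ofReal hi]
  · rw [← intervalIntegral.integral_of_le hab, integral_inv h0]
  · filter_upwards [ae_restrict_mem measurableSet_Ioc] with s hs
    exact inv_nonneg.2 (lt_of_lt_of_le ha hs.1.le).le

lemma lint_inv_Ioo {a b : ℝ} (ha : 0 < a) (hab : a ≤ b) :
    ∫⁻ s in Set.Ioo a b, ENNReal.ofReal s⁻¹ = ENNReal.ofReal (Real.log (b / a)) := by
  rw [Measure.restrict_congr_set Ioo_ae_eq_Ioc, lint_inv_Ioc ha hab]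

/-- Series–integral comparison at 0:
`∑_{n≥1} P(r^{-n} ≤ f(r^{-(n+1)} I)) ≤ (1/log r) ∫_0^∞ P(s ≤ f(s) I, rs < I) s⁻¹ ds
  ≤ ∑_{n≥1} P(r^{-(n+1)} ≤ f(r^{-n} I))`. -/
theorem series_integral_comparison_at_zero
    {Ω : Type*} [MeasurableSpace Ω] (ℙ : Measure Ω) [IsProbabilityMeasure ℙ]
    (I : Ω → ℝ) (hI : Measurable I) (hIpos : ∀ᵐ ω ∂ℙ, 0 < I ω)
    (f : ℝ → ℝ) (hf_nn : ∀ s : ℝ, 0 < s → 0 ≤ f s) (hf_mono : MonotoneOn f (Ioi 0))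
    (r : ℝ) (hr : 1 < r) :
    (∑' n : ℕ, ℙ {ω | r ^ (-((n : ℝ) + 1)) ≤ f (r ^ (-((n : ℝ) + 2)) * I ω)}) ≤
      ENNReal.ofReal (1 / Real.log r) *
        (∫⁻ s in Ioi (0 : ℝ),
          ℙ {ω | s ≤ f s * I ω ∧ r * s < I ω} * ENNReal.ofReal s⁻¹) ∧
    ENNReal.ofReal (1 / Real.log r) *
        (∫⁻ s in Ioi (0 : ℝ),
          ℙ {ω | s ≤ f s * I ω ∧ r * s < I ω} * ENNReal.ofReal s⁻¹) ≤
      ∑' n : ℕ, ℙ {ω | r ^ (-((n : ℝ) + 2)) ≤ f (r ^ (-((n : ℝ) + 1)) * I ω)} := by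
  have hr0 : (0:ℝ) < r := lt_trans one_pos hr
  have hlog : 0 < Real.log r := Real.log_pos hr
  have hzp1 : ∀ n : ℕ, r ^ (-((n : ℝ) + 1)) = r ^ (-((n:ℤ)+1)) := by
    intro n
    rw [show -((n:ℝ)+1) = ((-((n:ℤ)+1) : ℤ) : ℝ) by push_cast; ring, Real.rpow_intCast]
  have hzp2 : ∀ n : ℕ, r ^ (-((n : ℝ) + 2)) = r ^ (-((n:ℤ)+2)) := by
    intro n
    rw [show -((n:ℝ)+2) = ((-((n:ℤ)+2) : ℤ) : ℝ) by push_cast; ring, Real.rpow_intCast]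
  set g : ℝ → ℝ := fun t => f (Real.exp t) with hg_def
  have hg_mono : Monotone g := fun t t' h =>
    hf_mono (Real.exp_pos t) (Real.exp_pos t') (Real.exp_le_exp.2 h)
  have hg_meas : Measurable g := hg_mono.measurable
  have hfg : ∀ s : ℝ, 0 < s → g (Real.log s) = f s := by
    intro s hs; simp only [hg_def, Real.exp_log hs]
  set E : ℕ → Set Ω := fun n =>
    {ω | r ^ (-((n:ℤ)+1)) ≤ g (Real.log (r ^ (-((n:ℤ)+2)) * I ω))} with hE_def
  set F : ℕ → Set Ω := fun n =>
    {ω | r ^ (-((n:ℤ)+2)) ≤ g (Real.log (r ^ (-((n:ℤ)+1)) * I ω))} with hF_def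
  have hE_meas : ∀ n, MeasurableSet (E n) := fun n =>
    measurableSet_le measurable_const
      (hg_meas.comp (Real.measurable_log.comp (measurable_const.mul hI)))
  have hF_meas : ∀ n, MeasurableSet (F n) := fun n =>
    measurableSet_le measurable_const
      (hg_meas.comp (Real.measurable_log.comp (measurable_const.mul hI)))
  have hPE : ∀ n : ℕ,
      ℙ {ω | r ^ (-((n : ℝ) + 1)) ≤ f (r ^ (-((n : ℝ) + 2)) * I ω)} = ℙ (E n) := by
    intro n
    apply measure_congr
    rw [Filter.eventuallyEq_set]
    filter_upwards [hIpos] with ω hω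
    have hx : (0:ℝ) < r ^ (-((n:ℤ)+2)) * I ω := mul_pos (zpow_pos hr0 _) hω
    simp only [hE_def, Set.mem_setOf_eq, hzp1 n, hzp2 n, hfg _ hx]
  have hPF : ∀ n : ℕ,
      ℙ {ω | r ^ (-((n : ℝ) + 2)) ≤ f (r ^ (-((n : ℝ) + 1)) * I ω)} = ℙ (F n) := by
    intro n
    apply measure_congr
    rw [Filter.eventuallyEq_set]
    filter_upwards [hIpos] with ω hω
    have hx : (0:ℝ) < r ^ (-((n:ℤ)+1)) * I ω := mul_pos (zpow_pos hr0 _) hω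
    simp only [hF_def, Set.mem_setOf_eq, hzp1 n, hzp2 n, hfg _ hx]
  set S : Set (ℝ × Ω) := {p | p.1 ≤ g (Real.log p.1) * I p.2 ∧ r * p.1 < I p.2} with hS_def
  have hS : MeasurableSet S := by
    apply MeasurableSet.inter
    · exact measurableSet_le measurable_fst
        ((hg_meas.comp (Real.measurable_log.comp measurable_fst)).mul (hI.comp measurable_snd))
    · exact measurableSet_lt (measurable_const.mul measurable_fst) (hI.comp measurable_snd)
  set φ : ℝ × Ω → ENNReal := S.indicator (fun p => ENNReal.ofReal p.1⁻¹) with hφ_def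
  have hφ_meas : Measurable φ :=
    (ENNReal.measurable_ofReal.comp measurable_fst.inv).indicator hS
  have stepA : (∫⁻ s in Ioi (0 : ℝ),
        ℙ {ω | s ≤ f s * I ω ∧ r * s < I ω} * ENNReal.ofReal s⁻¹)
      = ∫⁻ s in Ioi (0:ℝ), ∫⁻ ω, φ (s, ω) ∂ℙ := by
    apply setLIntegral_congr_fun measurableSet_Ioi
    intro s hs
    beta_reduce
    have hfs : f s = g (Real.log s) := (hfg s hs).symm
    have hset : {ω | s ≤ f s * I ω ∧ r * s < I ω} = {ω | (s, ω) ∈ S} := by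
      ext ω; simp [hS_def, hfs]
    have hTs : MeasurableSet {ω | (s, ω) ∈ S} := measurable_prodMk_left hS
    have heq : ∀ ω, φ (s, ω) = Set.indicator {ω | (s, ω) ∈ S}
        (fun _ => ENNReal.ofReal s⁻¹) ω := by
      intro ω
      simp only [hφ_def, Set.indicator, Set.mem_setOf_eq]
    rw [hset]
    simp_rw [heq]
    rw [lintegral_indicator_const hTs, mul_comm]
  have stepB : (∫⁻ s in Ioi (0:ℝ), ∫⁻ ω, φ (s, ω) ∂ℙ)
      = ∫⁻ ω, (∫⁻ s in Ioi (0:ℝ), φ (s, ω)) ∂ℙ :=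
    lintegral_lintegral_swap (f := fun s ω => φ (s, ω)) hφ_meas.aemeasurable
  -- Step C : pointwise bounds in ω
  have hC : ∀ ω : Ω, 0 < I ω →
      (ENNReal.ofReal (Real.log r) * ∑' n : ℕ, (E n).indicator 1 ω
        ≤ ∫⁻ s in Ioi (0:ℝ), φ (s, ω)) ∧
      ((∫⁻ s in Ioi (0:ℝ), φ (s, ω))
        ≤ ENNReal.ofReal (Real.log r) * ∑' n : ℕ, (F n).indicator 1 ω) := by
    intro ω hc
    set c := I ω with hc_def
    set a : ℕ → ℝ := fun n => r ^ (-((n:ℤ)+1)) * c with ha_def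
    have ha_pos : ∀ n, 0 < a n := fun n => mul_pos (zpow_pos hr0 _) hc
    have ha_lt : ∀ n, a (n+1) < a n := by
      intro n
      apply mul_lt_mul_of_pos_right _ hc
      apply zpow_lt_zpow_right₀ hr
      push_cast; linarith
    have ha_anti : StrictAnti a := strictAnti_nat_of_succ_lt ha_lt
    have ha_succ : ∀ n : ℕ, a (n+1) = r ^ (-((n:ℤ)+2)) * c := by
      intro n
      simp only [ha_def]
      rw [show (-(((n+1:ℕ):ℤ)+1)) = -((n:ℤ)+2) by push_cast; ring]
    have hratio : ∀ n : ℕ, Real.log (a n / a (n+1)) = Real.log r := by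
      intro n
      congr 1
      rw [ha_succ n, ha_def]
      rw [mul_div_mul_right _ _ (ne_of_gt hc)]
      rw [← zpow_sub₀ (ne_of_gt hr0)]
      norm_num
    have fact1 : ∀ n : ℕ, ω ∈ E n → ∀ s ∈ Ioo (a (n+1)) (a n), (s, ω) ∈ S := by
      intro n hEn s hs
      have hs0 : 0 < s := lt_trans (ha_pos (n+1)) hs.1
      have hfa : r ^ (-((n:ℤ)+1)) ≤ f (a (n+1)) := by
        have h1 := hEn
        rw [hE_def] at h1
        simp only [Set.mem_setOf_eq] at h1
        rwa [hfg _ (by rw [← ha_succ n]; exact ha_pos (n+1)), ← ha_succ n] at h1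
      have hmono : f (a (n+1)) ≤ f s := hf_mono (ha_pos (n+1)) hs0 hs.1.le
      constructor
      · show s ≤ g (Real.log s) * c
        rw [hfg s hs0]
        calc s ≤ a n := hs.2.le
          _ = r ^ (-((n:ℤ)+1)) * c := rfl
          _ ≤ f (a (n+1)) * c := mul_le_mul_of_nonneg_right hfa hc.le
          _ ≤ f s * c := mul_le_mul_of_nonneg_right hmono hc.le
      · show r * s < c
        have h1 : r * s < r * a n := mul_lt_mul_of_pos_left hs.2 hr0
        have h2 : r * a n ≤ c := by
          have h3 : r * (r ^ (-((n:ℤ)+1)) * c) = r ^ (-(n:ℤ)) * c := by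
            rw [← mul_assoc, mul_comm r, ← zpow_add_one₀ (ne_of_gt hr0),
              show (-((n:ℤ)+1)+1) = -(n:ℤ) by ring]
          show r * (r ^ (-((n:ℤ)+1)) * c) ≤ c
          rw [h3]
          calc r ^ (-(n:ℤ)) * c ≤ 1 * c := by
                apply mul_le_mul_of_nonneg_right _ hc.le
                exact zpow_le_one_of_nonpos₀ hr.le (by simp)
            _ = c := one_mul c
        exact lt_of_lt_of_le h1 h2
    have fact2 : ∀ s : ℝ, 0 < s → (s, ω) ∈ S → ∃ n : ℕ, s ∈ Ioc (a (n+1)) (a n) := by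
      intro s hs0 hsS
      obtain ⟨m, hm⟩ := exists_mem_Ioc_zpow (div_pos hs0 hc) hr
      have hsc : s / c < r ^ (-1 : ℤ) := by
        rw [zpow_neg_one, div_lt_iff₀ hc, inv_mul_eq_div, lt_div_iff₀ hr0]
        have := hsS.2
        show s * r < c
        linarith [hsS.2]
      have hm2 : m < -1 := by
        have : (r:ℝ) ^ m < r ^ (-1 : ℤ) := lt_of_lt_of_le hm.1 (le_of_lt hsc)
        exact (zpow_lt_zpow_iff_right₀ hr).1 this
      refine ⟨(-(m+2)).toNat, ?_⟩
      have hn : ((-(m+2)).toNat : ℤ) = -(m+2) := Int.toNat_of_nonneg (by omega)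
      constructor
      · show a ((-(m+2)).toNat + 1) < s
        have h1 : a ((-(m+2)).toNat + 1) = r ^ m * c := by
          rw [ha_succ]
          congr 2
          omega
        rw [h1]
        exact (lt_div_iff₀ hc).1 hm.1
      · show s ≤ a ((-(m+2)).toNat)
        have h2 : a ((-(m+2)).toNat) = r ^ (m+1) * c := by
          simp only [ha_def]
          congr 2
          omega
        rw [h2]
        exact (div_le_iff₀ hc).1 hm.2
    have fact3 : ∀ n : ℕ, ∀ s ∈ Ioc (a (n+1)) (a n), (s, ω) ∈ S → ω ∈ F n := by
      intro n s hs hsS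
      have hs0 : 0 < s := lt_trans (ha_pos (n+1)) hs.1
      have h1 : s ≤ f s * c := by
        have := hsS.1
        rwa [hfg s hs0] at this
      have h2 : f s ≤ f (a n) := hf_mono hs0 (ha_pos n) hs.2
      have h3 : r ^ (-((n:ℤ)+2)) * c < f (a n) * c := by
        calc r ^ (-((n:ℤ)+2)) * c = a (n+1) := (ha_succ n).symm
          _ < s := hs.1
          _ ≤ f s * c := h1
          _ ≤ f (a n) * c := mul_le_mul_of_nonneg_right h2 hc.le
      have h4 : r ^ (-((n:ℤ)+2)) ≤ f (a n) :=
        le_of_lt ((mul_lt_mul_iff_of_pos_right hc).1 h3)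
      rw [hF_def]
      simp only [Set.mem_setOf_eq]
      rwa [hfg _ (ha_pos n)]
    -- disjointness and coverage of the interval families
    have hdisj' : ∀ {n m : ℕ}, n < m →
        Disjoint (Ioo (a (n+1)) (a n)) (Ioo (a (m+1)) (a m)) := by
      intro n m h
      apply Set.disjoint_left.2
      intro s hs1 hs2
      have hle : a m ≤ a (n+1) := ha_anti.antitone (by omega)
      have := hs1.1
      have := hs2.2
      linarith
    have hdisj : Pairwise (Function.onFun Disjoint fun n : ℕ => Ioo (a (n+1)) (a n)) := by
      intro n m hnm
      rcases hnm.lt_or_gt with h | h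
      · exact hdisj' h
      · exact (hdisj' h).symm
    have hUsub : (⋃ n : ℕ, Ioo (a (n+1)) (a n)) ⊆ Ioi (0:ℝ) :=
      Set.iUnion_subset fun n s hs => lt_trans (ha_pos _) hs.1
    constructor
    · -- lower bound
      have hterm : ∀ n : ℕ, (E n).indicator (1 : Ω → ENNReal) ω * ENNReal.ofReal (Real.log r)
          ≤ ∫⁻ s in Ioo (a (n+1)) (a n), φ (s, ω) := by
        intro n
        by_cases hEn : ω ∈ E n
        · rw [Set.indicator_of_mem hEn, Pi.one_apply, one_mul]
          have heq : (∫⁻ s in Ioo (a (n+1)) (a n), φ (s, ω))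
              = ∫⁻ s in Ioo (a (n+1)) (a n), ENNReal.ofReal s⁻¹ := by
            apply setLIntegral_congr_fun measurableSet_Ioo
            intro s hs
            beta_reduce
            rw [hφ_def]
            exact Set.indicator_of_mem (fact1 n hEn s hs) _
          rw [heq, lint_inv_Ioo (ha_pos _) (ha_lt n).le, hratio n]
        · simp [Set.indicator_of_notMem hEn]
      calc ENNReal.ofReal (Real.log r) * ∑' n : ℕ, (E n).indicator 1 ω
          = ∑' n : ℕ, (E n).indicator 1 ω * ENNReal.ofReal (Real.log r) := by
            rw [ENNReal.tsum_mul_right, mul_comm]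
        _ ≤ ∑' n : ℕ, ∫⁻ s in Ioo (a (n+1)) (a n), φ (s, ω) := ENNReal.tsum_le_tsum hterm
        _ = ∫⁻ s in ⋃ n : ℕ, Ioo (a (n+1)) (a n), φ (s, ω) :=
            (lintegral_iUnion (fun n => measurableSet_Ioo) hdisj _).symm
        _ ≤ ∫⁻ s in Ioi (0:ℝ), φ (s, ω) :=
            lintegral_mono' (Measure.restrict_mono hUsub le_rfl) le_rfl
    · -- upper bound
      set U := ⋃ n : ℕ, Ioc (a (n+1)) (a n) with hU_def
      have hUmeas : MeasurableSet U := MeasurableSet.iUnion fun n => measurableSet_Ioc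
      have h1 : (∫⁻ s in Ioi (0:ℝ), φ (s, ω))
          = ∫⁻ s in Ioi (0:ℝ), U.indicator (fun s => φ (s, ω)) s := by
        apply setLIntegral_congr_fun measurableSet_Ioi
        intro s hs
        beta_reduce
        by_cases hsU : s ∈ U
        · rw [Set.indicator_of_mem hsU]
        · rw [Set.indicator_of_notMem hsU, hφ_def]
          apply Set.indicator_of_notMem
          intro hsS
          obtain ⟨n, hn⟩ := fact2 s hs hsS
          exact hsU (Set.mem_iUnion.2 ⟨n, hn⟩)
      have hterm : ∀ n : ℕ, (∫⁻ s in Ioc (a (n+1)) (a n), φ (s, ω))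
          ≤ (F n).indicator (1 : Ω → ENNReal) ω * ENNReal.ofReal (Real.log r) := by
        intro n
        by_cases hFn : ω ∈ F n
        · rw [Set.indicator_of_mem hFn, Pi.one_apply, one_mul]
          calc (∫⁻ s in Ioc (a (n+1)) (a n), φ (s, ω))
              ≤ ∫⁻ s in Ioc (a (n+1)) (a n), ENNReal.ofReal s⁻¹ := by
                apply lintegral_mono
                intro s
                rw [hφ_def]
                exact Set.indicator_le_self _ _ _
            _ = ENNReal.ofReal (Real.log r) := by
                rw [lint_inv_Ioc (ha_pos _) (ha_lt n).le, hratio n]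
        · have hzero : (∫⁻ s in Ioc (a (n+1)) (a n), φ (s, ω))
              = ∫⁻ s in Ioc (a (n+1)) (a n), (0 : ENNReal) := by
            apply setLIntegral_congr_fun measurableSet_Ioc
            intro s hs
            beta_reduce
            rw [hφ_def]
            apply Set.indicator_of_notMem
            intro hsS
            exact hFn (fact3 n s hs hsS)
          rw [hzero, lintegral_zero]
          exact zero_le
      calc (∫⁻ s in Ioi (0:ℝ), φ (s, ω))
          = ∫⁻ s in U ∩ Ioi (0:ℝ), φ (s, ω) := by
            rw [h1, lintegral_indicator hUmeas, Measure.restrict_restrict hUmeas]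
        _ ≤ ∫⁻ s in U, φ (s, ω) :=
            lintegral_mono' (Measure.restrict_mono Set.inter_subset_left le_rfl) le_rfl
        _ ≤ ∑' n : ℕ, ∫⁻ s in Ioc (a (n+1)) (a n), φ (s, ω) := lintegral_iUnion_le _ _
        _ ≤ ∑' n : ℕ, (F n).indicator 1 ω * ENNReal.ofReal (Real.log r) :=
            ENNReal.tsum_le_tsum hterm
        _ = ENNReal.ofReal (Real.log r) * ∑' n : ℕ, (F n).indicator 1 ω := by
            rw [ENNReal.tsum_mul_right, mul_comm]
  -- Step D : integrate the pointwise bounds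
  have hunit : ENNReal.ofReal (1 / Real.log r) * ENNReal.ofReal (Real.log r) = 1 := by
    rw [← ENNReal.ofReal_mul (by positivity), one_div, inv_mul_cancel₀ (ne_of_gt hlog),
      ENNReal.ofReal_one]
  have hlowint : ENNReal.ofReal (Real.log r) * ∑' n : ℕ, ℙ (E n)
      ≤ ∫⁻ s in Ioi (0 : ℝ),
          ℙ {ω | s ≤ f s * I ω ∧ r * s < I ω} * ENNReal.ofReal s⁻¹ := by
    rw [stepA, stepB]
    have hmeas : Measurable fun ω => ∑' n : ℕ, (E n).indicator (1 : Ω → ENNReal) ω :=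
      Measurable.ennreal_tsum fun n => measurable_one.indicator (hE_meas n)
    calc ENNReal.ofReal (Real.log r) * ∑' n : ℕ, ℙ (E n)
        = ∫⁻ ω, ENNReal.ofReal (Real.log r) * ∑' n : ℕ, (E n).indicator 1 ω ∂ℙ := by
          rw [lintegral_const_mul _ hmeas,
            lintegral_tsum (fun n => (measurable_one.indicator (hE_meas n)).aemeasurable)]
          congr 1
          exact (tsum_congr fun n => lintegral_indicator_one (hE_meas n)).symm
      _ ≤ ∫⁻ ω, (∫⁻ s in Ioi (0:ℝ), φ (s, ω)) ∂ℙ := by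
          apply lintegral_mono_ae
          filter_upwards [hIpos] with ω hω
          exact (hC ω hω).1
  have hupint : (∫⁻ s in Ioi (0 : ℝ),
          ℙ {ω | s ≤ f s * I ω ∧ r * s < I ω} * ENNReal.ofReal s⁻¹)
      ≤ ENNReal.ofReal (Real.log r) * ∑' n : ℕ, ℙ (F n) := by
    rw [stepA, stepB]
    have hmeas : Measurable fun ω => ∑' n : ℕ, (F n).indicator (1 : Ω → ENNReal) ω :=
      Measurable.ennreal_tsum fun n => measurable_one.indicator (hF_meas n)
    calc (∫⁻ ω, (∫⁻ s in Ioi (0:ℝ), φ (s, ω)) ∂ℙ)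
        ≤ ∫⁻ ω, ENNReal.ofReal (Real.log r) * ∑' n : ℕ, (F n).indicator 1 ω ∂ℙ := by
          apply lintegral_mono_ae
          filter_upwards [hIpos] with ω hω
          exact (hC ω hω).2
      _ = ENNReal.ofReal (Real.log r) * ∑' n : ℕ, ℙ (F n) := by
          rw [lintegral_const_mul _ hmeas,
            lintegral_tsum (fun n => (measurable_one.indicator (hF_meas n)).aemeasurable)]
          congr 1
          exact tsum_congr fun n => lintegral_indicator_one (hF_meas n)
  constructor
  · calc (∑' n : ℕ, ℙ {ω | r ^ (-((n : ℝ) + 1)) ≤ f (r ^ (-((n : ℝ) + 2)) * I ω)})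
        = ∑' n : ℕ, ℙ (E n) := tsum_congr hPE
      _ = ENNReal.ofReal (1 / Real.log r) *
          (ENNReal.ofReal (Real.log r) * ∑' n : ℕ, ℙ (E n)) := by
          rw [← mul_assoc, hunit, one_mul]
      _ ≤ ENNReal.ofReal (1 / Real.log r) *
          (∫⁻ s in Ioi (0 : ℝ),
            ℙ {ω | s ≤ f s * I ω ∧ r * s < I ω} * ENNReal.ofReal s⁻¹) :=
          mul_le_mul_right hlowint _
  · calc ENNReal.ofReal (1 / Real.log r) *
          (∫⁻ s in Ioi (0 : ℝ),
            ℙ {ω | s ≤ f s * I ω ∧ r * s < I ω} * ENNReal.ofReal s⁻¹)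
        ≤ ENNReal.ofReal (1 / Real.log r) *
          (ENNReal.ofReal (Real.log r) * ∑' n : ℕ, ℙ (F n)) := mul_le_mul_right hupint _
      _ = ∑' n : ℕ, ℙ (F n) := by rw [← mul_assoc, hunit, one_mul]
      _ = ∑' n : ℕ, ℙ {ω | r ^ (-((n : ℝ) + 2)) ≤ f (r ^ (-((n : ℝ) + 1)) * I ω)} :=
          (tsum_congr hPF).symm
end

section
/- Let I be a nonnegative real random variable, let f : (0,∞) → [0,∞) be nondecreasing with f(s) → 0 as s → 0+, let r > 1 and λ > 0. Then ∫_0^λ P(s ≤ f(s)·I and r·s < I) · s^{−1} ds < ∞ if and only if ∫_0^λ P(s ≤ f(s)·I) · s^{−1} ds < ∞. -/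
open MeasureTheory Filter Set

/-- If `f` is nondecreasing on `(0,∞)` with `f(s) → 0` as `s → 0+`, then
`∫_0^λ P(s ≤ f(s) I, rs < I) s⁻¹ ds < ∞` iff `∫_0^λ P(s ≤ f(s) I) s⁻¹ ds < ∞`. -/
theorem finiteness_equivalence_at_zero
    {Ω : Type*} [MeasurableSpace Ω] (ℙ : Measure Ω) [IsProbabilityMeasure ℙ]
    (I : Ω → ℝ) (hI : Measurable I) (hI_nn : ∀ ω, 0 ≤ I ω)
    (f : ℝ → ℝ) (hf_nn : ∀ s : ℝ, 0 < s → 0 ≤ f s) (hf_mono : MonotoneOn f (Ioi 0))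
    (hf0 : Tendsto f (nhdsWithin 0 (Ioi 0)) (nhds 0))
    (r : ℝ) (hr : 1 < r) (l : ℝ) (hl : 0 < l) :
    (∫⁻ s in Ioc (0 : ℝ) l,
        ℙ {ω | s ≤ f s * I ω ∧ r * s < I ω} * ENNReal.ofReal s⁻¹ < ⊤) ↔
    (∫⁻ s in Ioc (0 : ℝ) l,
        ℙ {ω | s ≤ f s * I ω} * ENNReal.ofReal s⁻¹ < ⊤) := by
  have hr0 : (0:ℝ) < r := lt_trans one_pos hr
  -- eventually f s < r⁻¹ near 0 from the right
  have hev : ∀ᶠ s in nhdsWithin 0 (Ioi 0), f s < r⁻¹ :=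
    hf0.eventually_lt_const (by positivity)
  rw [eventually_nhdsWithin_iff, Metric.eventually_nhds_iff] at hev
  obtain ⟨δ, hδpos, hδ⟩ := hev
  set d : ℝ := min (δ / 2) l with hd
  have hd0 : 0 < d := lt_min (by linarith) hl
  have hdl : d ≤ l := min_le_right _ _
  -- on (0, d], the two events coincide
  have hkey : ∀ s ∈ Ioc (0:ℝ) d,
      {ω | s ≤ f s * I ω ∧ r * s < I ω} = {ω | s ≤ f s * I ω} := by
    intro s hs
    obtain ⟨hs0, hsd⟩ := hs
    have hflt : f s < r⁻¹ := by
      apply hδ (show dist s 0 < δ from ?_) hs0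
      rw [Real.dist_eq, sub_zero, abs_of_pos hs0]
      calc s ≤ d := hsd
        _ ≤ δ / 2 := min_le_left _ _
        _ < δ := by linarith
    ext ω
    simp only [Set.mem_setOf_eq, and_iff_left_iff_imp]
    intro hle
    have hIω := hI_nn ω
    have hfs : 0 < f s := by
      by_contra h
      push_neg at h
      have : f s = 0 := le_antisymm h (hf_nn s hs0)
      rw [this, zero_mul] at hle
      linarith
    have hI0 : 0 < I ω := by
      nlinarith
    have h1 : r * f s < 1 := by
      have := mul_lt_mul_of_pos_left hflt hr0
      rwa [mul_inv_cancel₀ (ne_of_gt hr0)] at this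
    nlinarith [mul_lt_mul_of_pos_right h1 hI0, mul_le_mul_of_nonneg_left hle (le_of_lt hr0)]
  -- the tail integral over (d, l] is finite for the larger integrand
  have htail : ∫⁻ s in Ioc d l, ℙ {ω | s ≤ f s * I ω} * ENNReal.ofReal s⁻¹ < ⊤ := by
    have hbound : ∫⁻ s in Ioc d l, ℙ {ω | s ≤ f s * I ω} * ENNReal.ofReal s⁻¹
        ≤ ∫⁻ _ in Ioc d l, ENNReal.ofReal d⁻¹ := by
      apply setLIntegral_mono' measurableSet_Ioc
      intro s hs
      have hs0 : 0 < s := lt_trans hd0 hs.1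
      calc ℙ {ω | s ≤ f s * I ω} * ENNReal.ofReal s⁻¹
          ≤ 1 * ENNReal.ofReal d⁻¹ := by
            apply mul_le_mul' prob_le_one
            exact ENNReal.ofReal_le_ofReal (by
              apply inv_anti₀ hd0 (le_of_lt hs.1))
        _ = ENNReal.ofReal d⁻¹ := one_mul _
    refine lt_of_le_of_lt hbound ?_
    rw [lintegral_const, Measure.restrict_apply_univ]
    exact ENNReal.mul_lt_top ENNReal.ofReal_lt_top measure_Ioc_lt_top
  -- split (0, l] = (0, d] ∪ (d, l]
  have hsplit : Ioc (0:ℝ) l = Ioc 0 d ∪ Ioc d l := (Ioc_union_Ioc_eq_Ioc (le_of_lt hd0) hdl).symm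
  have hdisj : Disjoint (Ioc (0:ℝ) d) (Ioc d l) := by
    apply Set.Ioc_disjoint_Ioc_of_le le_rfl
  have heq : ∫⁻ s in Ioc (0:ℝ) d, ℙ {ω | s ≤ f s * I ω ∧ r * s < I ω} * ENNReal.ofReal s⁻¹
      = ∫⁻ s in Ioc (0:ℝ) d, ℙ {ω | s ≤ f s * I ω} * ENNReal.ofReal s⁻¹ := by
    apply setLIntegral_congr_fun measurableSet_Ioc
    exact fun s hs => by rw [hkey s hs]
  constructor
  · intro h
    rw [hsplit, lintegral_union measurableSet_Ioc hdisj]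
    rw [hsplit, lintegral_union measurableSet_Ioc hdisj] at h
    refine ENNReal.add_lt_top.mpr ⟨?_, htail⟩
    rw [← heq]
    exact lt_of_le_of_lt (le_add_right le_rfl) h
  · intro h
    refine lt_of_le_of_lt ?_ h
    apply lintegral_mono
    intro s
    exact mul_le_mul' (measure_mono fun ω hω => hω.1) le_rfl
end

section
/- Let J be a nonnegative real random variable with E[log⁺ J] < ∞, let f : (0,∞) → [0,∞) be Borel measurable, and let r > 1. If ∫_1^∞ P(s < f(s)·J) · s^{−1} ds = ∞, then ∫_1^∞ P(s < f(s)·J and J < r·s) · s^{−1} ds = ∞. -/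
open MeasureTheory Filter Set


lemma aux_g_norm_le (t : ℝ) :
    ‖Set.indicator (Ioi 1) (fun t : ℝ => t⁻¹) t‖ ≤ ‖(1:ℝ)‖ := by
  rw [Set.indicator_apply]
  split_ifs with ht
  · have ht' : (1:ℝ) < t := ht
    rw [Real.norm_eq_abs, abs_of_nonneg (by positivity), norm_one]
    exact inv_le_one_of_one_le₀ ht'.le
  · simp

lemma aux_g_intble (a b : ℝ) :
    IntervalIntegrable (Set.indicator (Ioi 1) (fun t : ℝ => t⁻¹)) volume a b := by
  apply (intervalIntegrable_const (c := (1:ℝ))).mono_fun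
  · exact (measurable_inv.indicator measurableSet_Ioi).aestronglyMeasurable
  · exact ae_of_all _ aux_g_norm_le

lemma aux_g_integral (x : ℝ) (hx : 0 ≤ x) :
    ∫ t in (0:ℝ)..x, Set.indicator (Ioi 1) (fun t => t⁻¹) t = max (Real.log x) 0 := by
  set g : ℝ → ℝ := Set.indicator (Ioi 1) (fun t => t⁻¹) with hg
  rcases le_or_gt 1 x with h1 | h1
  · have i1 : ∫ t in (0:ℝ)..1, g t = 0 := by
      rw [intervalIntegral.integral_congr (g := fun _ => (0:ℝ)) (fun t ht => ?_)]
      · simp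
      · rw [uIcc_of_le (by norm_num)] at ht
        exact Set.indicator_of_notMem (by simpa using ht.2) _
    have i2 : ∫ t in (1:ℝ)..x, g t = Real.log x := by
      have e : ∫ t in Ioc (1:ℝ) x, g t = ∫ t in Ioc (1:ℝ) x, t⁻¹ :=
        setIntegral_congr_fun measurableSet_Ioc (fun t ht => Set.indicator_of_mem ht.1 _)
      rw [intervalIntegral.integral_of_le h1, e, ← intervalIntegral.integral_of_le h1,
        integral_inv_of_pos one_pos (by linarith)]
      simp
    have := intervalIntegral.integral_add_adjacent_intervals (aux_g_intble 0 1) (aux_g_intble 1 x)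
    rw [i1, zero_add] at this
    rw [max_eq_left (Real.log_nonneg h1), ← i2]
    exact this.symm
  · have e0 : ∫ t in (0:ℝ)..x, g t = 0 := by
      rw [intervalIntegral.integral_congr (g := fun _ => (0:ℝ)) (fun t ht => ?_)]
      · simp
      · rw [uIcc_of_le hx] at ht
        refine Set.indicator_of_notMem (by simp; linarith [ht.2]) _
    rw [e0, max_eq_right (Real.log_nonpos hx h1.le)]


section Test
variable {Ω : Type*} [MeasurableSpace Ω] (ℙ : Measure Ω) [IsProbabilityMeasure ℙ]
    (J : Ω → ℝ) (hJ : Measurable J) (hJ_nn : ∀ ω, 0 ≤ J ω)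
    (hlog : ∫⁻ ω, ENNReal.ofReal (max (Real.log (J ω)) 0) ∂ℙ < ⊤)
    (f : ℝ → ℝ) (hf : Measurable f) (r : ℝ) (hr : 1 < r)

include hJ hJ_nn hlog hr in
lemma aux_tail_finite :
    ∫⁻ s in Ioi (1:ℝ), ℙ {ω | s ≤ J ω / r} * ENNReal.ofReal s⁻¹ < ⊤ := by
  have hr0 : (0:ℝ) < r := lt_trans one_pos hr
  set g : ℝ → ℝ := Set.indicator (Ioi 1) (fun t => t⁻¹) with hg
  have key := lintegral_comp_eq_lintegral_meas_le_mul (μ := ℙ) (f := fun ω => J ω / r) (g := g)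
    (ae_of_all _ fun ω => div_nonneg (hJ_nn ω) hr0.le)
    ((hJ.div_const r).aemeasurable)
    (fun t _ => aux_g_intble 0 t)
    (ae_of_all _ fun t => Set.indicator_apply_nonneg (fun h => by
      have : (1:ℝ) < t := h
      positivity))
  have lhs_le : ∫⁻ ω, ENNReal.ofReal (∫ t in (0:ℝ)..(J ω / r), g t) ∂ℙ
      ≤ ∫⁻ ω, ENNReal.ofReal (max (Real.log (J ω)) 0) ∂ℙ := by
    refine lintegral_mono fun ω => ENNReal.ofReal_le_ofReal ?_
    rw [aux_g_integral _ (div_nonneg (hJ_nn ω) hr0.le)]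
    refine max_le ?_ (le_max_right _ _)
    rcases le_or_gt (J ω / r) 1 with h | h
    · exact le_trans (Real.log_nonpos (div_nonneg (hJ_nn ω) hr0.le) h) (le_max_right _ _)
    · refine le_trans (Real.log_le_log (by linarith) ?_) (le_max_left _ _)
      calc J ω / r ≤ J ω / 1 := by
            apply div_le_div_of_nonneg_left (hJ_nn ω) one_pos hr.le
        _ = J ω := div_one _
  have step : ∫⁻ s in Ioi (1:ℝ), ℙ {ω | s ≤ J ω / r} * ENNReal.ofReal s⁻¹
      = ∫⁻ s in Ioi (1:ℝ), ℙ {ω | s ≤ J ω / r} * ENNReal.ofReal (g s) := by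
    refine setLIntegral_congr_fun measurableSet_Ioi (fun s hs => ?_)
    rw [hg, Set.indicator_of_mem hs]
  calc ∫⁻ s in Ioi (1:ℝ), ℙ {ω | s ≤ J ω / r} * ENNReal.ofReal s⁻¹
      = ∫⁻ s in Ioi (1:ℝ), ℙ {ω | s ≤ J ω / r} * ENNReal.ofReal (g s) := step
    _ ≤ ∫⁻ s in Ioi (0:ℝ), ℙ {ω | s ≤ J ω / r} * ENNReal.ofReal (g s) :=
        lintegral_mono_set (fun s hs => show (0:ℝ) < s from lt_trans one_pos (show (1:ℝ) < s from hs))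
    _ = ∫⁻ ω, ENNReal.ofReal (∫ t in (0:ℝ)..(J ω / r), g t) ∂ℙ := key.symm
    _ ≤ ∫⁻ ω, ENNReal.ofReal (max (Real.log (J ω)) 0) ∂ℙ := lhs_le
    _ < ⊤ := hlog
end Test
/-- If `E[log⁺ J] < ∞` and `∫_1^∞ P(s < f(s) J) s⁻¹ ds = ∞`, then
`∫_1^∞ P(s < f(s) J, J < rs) s⁻¹ ds = ∞`. -/
theorem divergence_transfer_at_infinity
    {Ω : Type*} [MeasurableSpace Ω] (ℙ : Measure Ω) [IsProbabilityMeasure ℙ]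
    (J : Ω → ℝ) (hJ : Measurable J) (hJ_nn : ∀ ω, 0 ≤ J ω)
    (hlog : ∫⁻ ω, ENNReal.ofReal (max (Real.log (J ω)) 0) ∂ℙ < ⊤)
    (f : ℝ → ℝ) (hf : Measurable f) (hf_nn : ∀ s : ℝ, 0 < s → 0 ≤ f s)
    (r : ℝ) (hr : 1 < r)
    (hdiv : ∫⁻ s in Ioi (1 : ℝ), ℙ {ω | s < f s * J ω} * ENNReal.ofReal s⁻¹ = ⊤) :
    ∫⁻ s in Ioi (1 : ℝ),
        ℙ {ω | s < f s * J ω ∧ J ω < r * s} * ENNReal.ofReal s⁻¹ = ⊤ := by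
  have hr0 : (0:ℝ) < r := lt_trans one_pos hr
  -- measurability of the section measures
  have hmB : Measurable fun s : ℝ => ℙ {ω | s < f s * J ω ∧ J ω < r * s} := by
    have hset : MeasurableSet {p : ℝ × Ω | p.1 < f p.1 * J p.2 ∧ J p.2 < r * p.1} := by
      apply MeasurableSet.inter
      · exact measurableSet_lt measurable_fst
          ((hf.comp measurable_fst).mul (hJ.comp measurable_snd))
      · exact measurableSet_lt (hJ.comp measurable_snd) (measurable_fst.const_mul r)
    exact measurable_measure_prodMk_left hset
  have hmC : Measurable fun s : ℝ => ℙ {ω | s ≤ J ω / r} := by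
    have hset : MeasurableSet {p : ℝ × Ω | p.1 ≤ J p.2 / r} :=
      measurableSet_le measurable_fst ((hJ.comp measurable_snd).div_const r)
    exact measurable_measure_prodMk_left hset
  -- pointwise splitting
  have hsplit : ∀ s : ℝ, ℙ {ω | s < f s * J ω}
      ≤ ℙ {ω | s < f s * J ω ∧ J ω < r * s} + ℙ {ω | s ≤ J ω / r} := by
    intro s
    refine le_trans (measure_mono fun ω hω => ?_) (measure_union_le _ _)
    by_cases h : J ω < r * s
    · exact Or.inl ⟨hω, h⟩
    · refine Or.inr ?_
      have : r * s ≤ J ω := not_lt.1 h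
      show s ≤ J ω / r
      rw [le_div_iff₀ hr0]
      linarith [this]
  by_contra hB
  have hC := aux_tail_finite ℙ J hJ hJ_nn hlog r hr
  have hmono : (⊤ : ENNReal) ≤ ∫⁻ s in Ioi (1:ℝ),
      (ℙ {ω | s < f s * J ω ∧ J ω < r * s} * ENNReal.ofReal s⁻¹
        + ℙ {ω | s ≤ J ω / r} * ENNReal.ofReal s⁻¹) := by
    rw [← hdiv]
    refine lintegral_mono fun s => ?_
    rw [← add_mul]
    exact mul_le_mul_left (hsplit s) _
  rw [lintegral_add_left (f := fun s : ℝ => ℙ {ω | s < f s * J ω ∧ J ω < r * s} * ENNReal.ofReal s⁻¹)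
    (hmB.mul measurable_inv.ennreal_ofReal)] at hmono
  have hfin : (∫⁻ s in Ioi (1:ℝ), ℙ {ω | s < f s * J ω ∧ J ω < r * s} * ENNReal.ofReal s⁻¹)
      + ∫⁻ s in Ioi (1:ℝ), ℙ {ω | s ≤ J ω / r} * ENNReal.ofReal s⁻¹ < ⊤ :=
    ENNReal.add_lt_top.2 ⟨lt_top_iff_ne_top.2 hB, hC⟩
  exact (lt_irrefl _ (lt_of_le_of_lt hmono hfin))
end

section
/- Let I be an almost surely strictly positive real random variable, let f : (0,∞) → [0,∞) be nondecreasing, and let r > 1. Then, as an identity in [0,+∞], ∫_1^∞ P(r^{t} ≤ f(r^{t}·I)) dt = (1/log r) · ∫_0^∞ P(s ≤ f(s)·I and r·I < s) · s^{−1} ds. -/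
open MeasureTheory Filter Set

private lemma lintegral_image_deriv {s : Set ℝ} {φ φ' : ℝ → ℝ}
    (hs : MeasurableSet s) (hφ : ∀ x ∈ s, HasDerivWithinAt φ (φ' x) s x)
    (hinj : InjOn φ s) (g : ℝ → ENNReal) :
    ∫⁻ x in φ '' s, g x = ∫⁻ x in s, ENNReal.ofReal |φ' x| * g (φ x) := by
  simpa only [ContinuousLinearMap.det_toSpanSingleton] using
    lintegral_image_eq_lintegral_abs_det_fderiv_mul volume hs
      (fun x hx => (hφ x hx).hasFDerivWithinAt) hinj g

private lemma key_pointwise (g : ℝ → ℝ) (r c : ℝ) (hr : 1 < r) (hc : 0 < c) :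
    ∫⁻ t in Ioi (1 : ℝ), {t' : ℝ | r ^ t' ≤ g (r ^ t' * c)}.indicator 1 t =
      ENNReal.ofReal (1 / Real.log r) *
        ∫⁻ s in Ioi (0 : ℝ),
          {s' : ℝ | s' ≤ g s' * c ∧ r * c < s'}.indicator 1 s * ENNReal.ofReal s⁻¹ := by
  have hrpos : (0 : ℝ) < r := lt_trans one_pos hr
  have hlog : 0 < Real.log r := Real.log_pos hr
  have hrc : 0 < r * c := mul_pos hrpos hc
  set φ : ℝ → ℝ := fun t => r ^ t * c with hφdef
  have hφ' : ∀ t ∈ Ioi (1 : ℝ), HasDerivWithinAt φ (r ^ t * Real.log r * c) (Ioi 1) t :=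
    fun t _ => (((Real.hasStrictDerivAt_const_rpow hrpos t).hasDerivAt).mul_const c).hasDerivWithinAt
  have hmono : StrictMonoOn φ (Ioi 1) := by
    intro x _ y _ hxy
    exact mul_lt_mul_of_pos_right ((Real.rpow_lt_rpow_left_iff hr).2 hxy) hc
  have himg : φ '' Ioi 1 = Ioi (r * c) := by
    ext u
    constructor
    · rintro ⟨t, ht, rfl⟩
      have : r ^ (1 : ℝ) < r ^ t := (Real.rpow_lt_rpow_left_iff hr).2 ht
      rw [Real.rpow_one] at this
      exact mul_lt_mul_of_pos_right this hc
    · intro hu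
      have hu0 : 0 < u := lt_trans hrc hu
      have huc : 0 < u / c := div_pos hu0 hc
      refine ⟨Real.logb r (u / c), ?_, ?_⟩
      · rw [mem_Ioi, Real.lt_logb_iff_rpow_lt hr huc, Real.rpow_one]
        exact (lt_div_iff₀ hc).2 hu
      · simp only [hφdef, Real.rpow_logb hrpos hr.ne' huc]
        field_simp
  -- rewrite RHS integral as integral over Ioi (r*c)
  have step1 :
      ∫⁻ s in Ioi (0 : ℝ),
          {s' : ℝ | s' ≤ g s' * c ∧ r * c < s'}.indicator 1 s * ENNReal.ofReal s⁻¹ =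
      ∫⁻ s in Ioi (r * c), {s' : ℝ | s' ≤ g s' * c}.indicator 1 s * ENNReal.ofReal s⁻¹ := by
    have heq : ∀ s : ℝ,
        {s' : ℝ | s' ≤ g s' * c ∧ r * c < s'}.indicator 1 s * ENNReal.ofReal s⁻¹ =
        (Ioi (r * c)).indicator
          (fun s' => {s'' : ℝ | s'' ≤ g s'' * c}.indicator 1 s' * ENNReal.ofReal s'⁻¹) s := by
      intro s
      by_cases h : r * c < s
      · simp [Set.indicator_apply, h, mem_Ioi]
      · simp [Set.indicator_apply, h, mem_Ioi]
    simp_rw [heq]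
    rw [lintegral_indicator measurableSet_Ioi,
      Measure.restrict_restrict measurableSet_Ioi, Set.Ioi_inter_Ioi,
      sup_eq_left.2 hrc.le]
  rw [step1, ← himg,
    lintegral_image_deriv measurableSet_Ioi hφ' (hmono.injOn) _]
  have step2 : ∀ t ∈ Ioi (1 : ℝ),
      ENNReal.ofReal |r ^ t * Real.log r * c| *
          ({s'' : ℝ | s'' ≤ g s'' * c}.indicator 1 (φ t) * ENNReal.ofReal (φ t)⁻¹) =
      ENNReal.ofReal (Real.log r) * {t' : ℝ | r ^ t' ≤ g (r ^ t' * c)}.indicator 1 t := by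
    intro t _
    have hrt : 0 < r ^ t := Real.rpow_pos_of_pos hrpos t
    have hφt : 0 < φ t := mul_pos hrt hc
    have habs : |r ^ t * Real.log r * c| = r ^ t * Real.log r * c := by
      rw [abs_of_pos]; positivity
    have hmemiff : φ t ∈ {s'' : ℝ | s'' ≤ g s'' * c} ↔
        t ∈ {t' : ℝ | r ^ t' ≤ g (r ^ t' * c)} := by
      simp only [mem_setOf_eq, hφdef]
      exact mul_le_mul_iff_of_pos_right hc
    rw [habs, Set.indicator_apply, Set.indicator_apply, if_congr hmemiff rfl rfl]
    by_cases h : t ∈ {t' : ℝ | r ^ t' ≤ g (r ^ t' * c)}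
    · simp only [h, if_pos, Pi.one_apply, one_mul, mul_one]
      rw [← ENNReal.ofReal_mul (by positivity)]
      congr 1
      rw [hφdef]
      field_simp
    · simp [h]
  rw [setLIntegral_congr_fun measurableSet_Ioi step2,
    lintegral_const_mul' _ _ ENNReal.ofReal_ne_top, ← mul_assoc,
    ← ENNReal.ofReal_mul (by positivity), one_div, inv_mul_cancel₀ hlog.ne',
    ENNReal.ofReal_one, one_mul]

/-- Change-of-variables identity at `+∞`:
`∫_1^∞ P(r^t ≤ f(r^t I)) dt = (1/log r) ∫_0^∞ P(s ≤ f(s) I, rI < s) s⁻¹ ds`. -/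
theorem change_of_variables_at_infinity
    {Ω : Type*} [MeasurableSpace Ω] (ℙ : Measure Ω) [IsProbabilityMeasure ℙ]
    (I : Ω → ℝ) (hI : Measurable I) (hIpos : ∀ᵐ ω ∂ℙ, 0 < I ω)
    (f : ℝ → ℝ) (hf_nn : ∀ s : ℝ, 0 < s → 0 ≤ f s) (hf_mono : MonotoneOn f (Ioi 0))
    (r : ℝ) (hr : 1 < r) :
    ∫⁻ t in Ioi (1 : ℝ), ℙ {ω | r ^ t ≤ f (r ^ t * I ω)} =
      ENNReal.ofReal (1 / Real.log r) *
        ∫⁻ s in Ioi (0 : ℝ),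
          ℙ {ω | s ≤ f s * I ω ∧ r * I ω < s} * ENNReal.ofReal s⁻¹ := by
  have hrpos : (0 : ℝ) < r := lt_trans one_pos hr
  set g : ℝ → ℝ := fun x => if 0 < x then f x else 0 with hg_def
  have hg_mono : Monotone g := by
    intro x y hxy
    by_cases hx : 0 < x
    · have hy : 0 < y := lt_of_lt_of_le hx hxy
      simpa [g, hx, hy] using hf_mono hx hy hxy
    · by_cases hy : 0 < y
      · simpa [g, hx, hy] using hf_nn y hy
      · simp [g, hx, hy]
  have hg_meas : Measurable g := hg_mono.measurable
  have hrpow_meas : Measurable fun t : ℝ => r ^ t :=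
    (continuous_const.rpow continuous_id fun _ => Or.inl hrpos.ne').measurable
  -- replace f by g on both sides
  have hL1 : ∀ t : ℝ, ℙ {ω | r ^ t ≤ f (r ^ t * I ω)} = ℙ {ω | r ^ t ≤ g (r ^ t * I ω)} := by
    intro t
    apply measure_congr
    rw [Filter.eventuallyEq_set]
    filter_upwards [hIpos] with ω hω
    have hpos : 0 < r ^ t * I ω := mul_pos (Real.rpow_pos_of_pos hrpos t) hω
    simp [g, hpos]
  have hR1 : ∀ s : ℝ, s ∈ Ioi (0:ℝ) →
      ℙ {ω | s ≤ f s * I ω ∧ r * I ω < s} = ℙ {ω | s ≤ g s * I ω ∧ r * I ω < s} := by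
    intro s hs
    have : g s = f s := if_pos hs
    rw [this]
  simp only [hL1]
  have hR1' :
      ∫⁻ s in Ioi (0:ℝ), ℙ {ω | s ≤ f s * I ω ∧ r * I ω < s} * ENNReal.ofReal s⁻¹ =
      ∫⁻ s in Ioi (0:ℝ), ℙ {ω | s ≤ g s * I ω ∧ r * I ω < s} * ENNReal.ofReal s⁻¹ :=
    setLIntegral_congr_fun measurableSet_Ioi
      (fun s hs => by rw [hR1 s hs])
  rw [hR1']
  -- measurability of the sliced sets
  have hAt : ∀ t : ℝ, MeasurableSet {ω | r ^ t ≤ g (r ^ t * I ω)} := fun t =>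
    measurableSet_le measurable_const (hg_meas.comp (hI.const_mul _))
  have hBs : ∀ s : ℝ, MeasurableSet {ω | s ≤ g s * I ω ∧ r * I ω < s} := fun s =>
    (measurableSet_le measurable_const (hI.const_mul _)).inter
      (measurableSet_lt (hI.const_mul _) measurable_const)
  -- express probabilities as lintegrals of indicators
  have hL2 : ∀ t : ℝ, ℙ {ω | r ^ t ≤ g (r ^ t * I ω)} =
      ∫⁻ ω, ({ω' | r ^ t ≤ g (r ^ t * I ω')}).indicator 1 ω ∂ℙ :=
    fun t => (lintegral_indicator_one (hAt t)).symm
  have hR2 : ∀ s : ℝ, ℙ {ω | s ≤ g s * I ω ∧ r * I ω < s} * ENNReal.ofReal s⁻¹ =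
      ∫⁻ ω, ({ω' | s ≤ g s * I ω' ∧ r * I ω' < s}).indicator 1 ω * ENNReal.ofReal s⁻¹ ∂ℙ := by
    intro s
    rw [lintegral_mul_const' _ _ ENNReal.ofReal_ne_top, lintegral_indicator_one (hBs s)]
  simp only [hL2]
  simp only [hR2]
  -- Tonelli on both sides
  have hswapL :
      ∫⁻ t in Ioi (1:ℝ), ∫⁻ ω, ({ω' | r ^ t ≤ g (r ^ t * I ω')}).indicator 1 ω ∂ℙ =
      ∫⁻ ω, (∫⁻ t in Ioi (1:ℝ), ({ω' | r ^ t ≤ g (r ^ t * I ω')}).indicator 1 ω) ∂ℙ := by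
    apply lintegral_lintegral_swap
    have hA : MeasurableSet {p : ℝ × Ω | r ^ p.1 ≤ g (r ^ p.1 * I p.2)} :=
      measurableSet_le (hrpow_meas.comp measurable_fst)
        (hg_meas.comp ((hrpow_meas.comp measurable_fst).mul (hI.comp measurable_snd)))
    have : (Function.uncurry fun t ω => ({ω' | r ^ t ≤ g (r ^ t * I ω')}).indicator 1 ω) =
        ({p : ℝ × Ω | r ^ p.1 ≤ g (r ^ p.1 * I p.2)}).indicator (fun _ => (1 : ENNReal)) := by
      funext p
      simp [Function.uncurry, Set.indicator_apply]
    rw [this]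
    exact ((measurable_const.indicator hA).aemeasurable)
  have hswapR :
      ∫⁻ s in Ioi (0:ℝ), ∫⁻ ω, ({ω' | s ≤ g s * I ω' ∧ r * I ω' < s}).indicator 1 ω
          * ENNReal.ofReal s⁻¹ ∂ℙ =
      ∫⁻ ω, (∫⁻ s in Ioi (0:ℝ), ({ω' | s ≤ g s * I ω' ∧ r * I ω' < s}).indicator 1 ω
          * ENNReal.ofReal s⁻¹) ∂ℙ := by
    apply lintegral_lintegral_swap
    have hB : MeasurableSet {p : ℝ × Ω | p.1 ≤ g p.1 * I p.2 ∧ r * I p.2 < p.1} :=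
      (measurableSet_le measurable_fst
          ((hg_meas.comp measurable_fst).mul (hI.comp measurable_snd))).inter
        (measurableSet_lt ((hI.comp measurable_snd).const_mul r) measurable_fst)
    have : (Function.uncurry fun s ω => ({ω' | s ≤ g s * I ω' ∧ r * I ω' < s}).indicator 1 ω
          * ENNReal.ofReal s⁻¹) =
        fun p : ℝ × Ω =>
          ({p' : ℝ × Ω | p'.1 ≤ g p'.1 * I p'.2 ∧ r * I p'.2 < p'.1}).indicator
              (fun _ => (1 : ENNReal)) p * ENNReal.ofReal p.1⁻¹ := by
      funext p
      simp [Function.uncurry, Set.indicator_apply]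
    rw [this]
    exact ((measurable_const.indicator hB).mul
      (ENNReal.measurable_ofReal.comp (measurable_fst.inv))).aemeasurable
  rw [hswapL, hswapR, ← lintegral_const_mul' _ _ ENNReal.ofReal_ne_top]
  apply lintegral_congr_ae
  filter_upwards [hIpos] with ω hω
  -- reduce to the pointwise lemma with c = I ω
  have := key_pointwise g r (I ω) hr hω
  convert this using 2 <;> rfl
end

section
/- Let I be a nonnegative real random variable with P(I > t) > 0 for every t > 0 and whose tail is regularly varying of index −γ for some γ > 0 in the ratio sense: for every c > 0, P(I > ct)/P(I > t) → c^{−γ} as t → +∞. Let f : (0,∞) → (0,∞) be Borel measurable with f(s)/s → 0 as s → 0+, and let β > 0 and λ > 0. Then ∫_0^λ P(s/f(s) < I) · s^{−1} ds < ∞ if and only if ∫_0^λ P(β·s/f(s) < I) · s^{−1} ds < ∞. -/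
open MeasureTheory Filter Set


lemma regular_case_aux
    {Ω : Type*} [MeasurableSpace Ω] (ℙ : Measure Ω) [IsProbabilityMeasure ℙ]
    (I : Ω → ℝ)
    (hpos : ∀ t : ℝ, 0 < t → 0 < ℙ {ω | t < I ω})
    (γ : ℝ)
    (hreg : ∀ c : ℝ, 0 < c → Tendsto (fun t : ℝ =>
        (ℙ {ω | c * t < I ω}).toReal / (ℙ {ω | t < I ω}).toReal) atTop
        (nhds (c ^ (-γ))))
    (f : ℝ → ℝ) (hf_pos : ∀ s : ℝ, 0 < s → 0 < f s)
    (hf0 : Tendsto (fun s => f s / s) (nhdsWithin 0 (Ioi 0)) (nhds 0))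
    (β : ℝ) (hβ : 0 < β) (l : ℝ) (hl : 0 < l)
    (hfin : ∫⁻ s in Ioc (0 : ℝ) l,
        ℙ {ω | s / f s < I ω} * ENNReal.ofReal s⁻¹ < ⊤) :
    ∫⁻ s in Ioc (0 : ℝ) l,
        ℙ {ω | β * s / f s < I ω} * ENNReal.ofReal s⁻¹ < ⊤ := by
  set K : ℝ := β ^ (-γ) + 1 with hKdef
  have hK0 : 0 < K := by positivity
  -- eventual bound on the ratio
  obtain ⟨T, hT⟩ := ((hreg β hβ).eventually_le_const
    (by simp [hKdef] : β ^ (-γ) < K)).exists_forall_of_atTop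
  have hbound : ∀ t : ℝ, max T 1 ≤ t →
      ℙ {ω | β * t < I ω} ≤ ENNReal.ofReal K * ℙ {ω | t < I ω} := by
    intro t ht
    have ht0 : 0 < t := lt_of_lt_of_le one_pos (le_trans (le_max_right T 1) ht)
    have hden : 0 < (ℙ {ω | t < I ω}).toReal :=
      ENNReal.toReal_pos (hpos t ht0).ne' (measure_ne_top _ _)
    have h1 := hT t (le_trans (le_max_left _ _) ht)
    have hle : (ℙ {ω | β * t < I ω}).toReal ≤ K * (ℙ {ω | t < I ω}).toReal := by
      rw [div_le_iff₀ hden] at h1; exact h1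
    calc ℙ {ω | β * t < I ω}
        = ENNReal.ofReal (ℙ {ω | β * t < I ω}).toReal :=
          (ENNReal.ofReal_toReal (measure_ne_top _ _)).symm
      _ ≤ ENNReal.ofReal (K * (ℙ {ω | t < I ω}).toReal) :=
          ENNReal.ofReal_le_ofReal hle
      _ = ENNReal.ofReal K * ENNReal.ofReal (ℙ {ω | t < I ω}).toReal :=
          ENNReal.ofReal_mul hK0.le
      _ = ENNReal.ofReal K * ℙ {ω | t < I ω} := by
          rw [ENNReal.ofReal_toReal (measure_ne_top _ _)]
  -- s / f s → ∞ as s → 0+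
  have htend : Tendsto (fun s => s / f s) (nhdsWithin 0 (Ioi 0)) atTop := by
    have h1 : Tendsto (fun s => f s / s) (nhdsWithin 0 (Ioi 0)) (nhdsWithin 0 (Ioi 0)) := by
      refine tendsto_nhdsWithin_iff.mpr ⟨hf0, ?_⟩
      filter_upwards [self_mem_nhdsWithin] with s hs
      exact div_pos (hf_pos s hs) hs
    have h2 := h1.inv_tendsto_nhdsGT_zero
    refine h2.congr fun s => ?_
    simp [inv_div]
  -- find δ
  have hev : {s : ℝ | max T 1 ≤ s / f s} ∈ nhdsWithin (0:ℝ) (Ioi 0) :=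
    htend.eventually_ge_atTop (max T 1)
  rw [mem_nhdsGT_iff_exists_Ioc_subset] at hev
  obtain ⟨u, hu, hsub⟩ := hev
  set δ : ℝ := min u l with hδdef
  have hδ0 : 0 < δ := lt_min hu hl
  have hδl : δ ≤ l := min_le_right u l
  have hsplit : (∫⁻ s in Ioc (0 : ℝ) l,
        ℙ {ω | β * s / f s < I ω} * ENNReal.ofReal s⁻¹)
      ≤ (∫⁻ s in Ioc (0 : ℝ) δ,
        ℙ {ω | β * s / f s < I ω} * ENNReal.ofReal s⁻¹)
      + (∫⁻ s in Ioc δ l,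
        ℙ {ω | β * s / f s < I ω} * ENNReal.ofReal s⁻¹) := by
    rw [← Ioc_union_Ioc_eq_Ioc hδ0.le hδl]
    exact lintegral_union_le _ _ _
  have part1 : (∫⁻ s in Ioc (0 : ℝ) δ,
      ℙ {ω | β * s / f s < I ω} * ENNReal.ofReal s⁻¹) < ⊤ := by
    have hstep : (∫⁻ s in Ioc (0 : ℝ) δ,
        ℙ {ω | β * s / f s < I ω} * ENNReal.ofReal s⁻¹)
        ≤ ∫⁻ s in Ioc (0 : ℝ) δ,
          ENNReal.ofReal K * (ℙ {ω | s / f s < I ω} * ENNReal.ofReal s⁻¹) := by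
      refine setLIntegral_mono' measurableSet_Ioc fun s hs => ?_
      have hmem : s ∈ Ioc (0:ℝ) u := ⟨hs.1, le_trans hs.2 (min_le_left u l)⟩
      have hge : max T 1 ≤ s / f s := hsub hmem
      have := hbound (s / f s) hge
      rw [← mul_div_assoc] at this
      rw [← mul_assoc]
      exact mul_le_mul_left this _
    rw [lintegral_const_mul' _ _ ENNReal.ofReal_ne_top] at hstep
    refine lt_of_le_of_lt hstep (ENNReal.mul_lt_top ENNReal.ofReal_lt_top ?_)
    exact lt_of_le_of_lt (lintegral_mono_set (Ioc_subset_Ioc_right hδl)) hfin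
  have part2 : (∫⁻ s in Ioc δ l,
      ℙ {ω | β * s / f s < I ω} * ENNReal.ofReal s⁻¹) < ⊤ := by
    have hstep : (∫⁻ s in Ioc δ l,
        ℙ {ω | β * s / f s < I ω} * ENNReal.ofReal s⁻¹)
        ≤ ∫⁻ _ in Ioc δ l, ENNReal.ofReal δ⁻¹ := by
      refine setLIntegral_mono' measurableSet_Ioc fun s hs => ?_
      calc ℙ {ω | β * s / f s < I ω} * ENNReal.ofReal s⁻¹
          ≤ 1 * ENNReal.ofReal δ⁻¹ := by
            refine mul_le_mul' prob_le_one (ENNReal.ofReal_le_ofReal ?_)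
            exact inv_anti₀ hδ0 hs.1.le
        _ = ENNReal.ofReal δ⁻¹ := one_mul _
    rw [setLIntegral_const] at hstep
    refine lt_of_le_of_lt hstep (ENNReal.mul_lt_top ENNReal.ofReal_lt_top ?_)
    exact lt_of_le_of_lt (measure_mono Ioc_subset_Icc_self) measure_Icc_lt_top
  exact lt_of_le_of_lt hsplit (ENNReal.add_lt_top.mpr ⟨part1, part2⟩)

/-- In the regular case, for `f` with `f(s)/s → 0` as `s → 0+` and any `β > 0`,
`∫_0^λ P(s/f(s) < I) s⁻¹ ds < ∞` iff `∫_0^λ P(βs/f(s) < I) s⁻¹ ds < ∞`. -/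
theorem regular_case_equivalence_at_zero
    {Ω : Type*} [MeasurableSpace Ω] (ℙ : Measure Ω) [IsProbabilityMeasure ℙ]
    (I : Ω → ℝ) (hI : Measurable I) (hI_nn : ∀ ω, 0 ≤ I ω)
    (hpos : ∀ t : ℝ, 0 < t → 0 < ℙ {ω | t < I ω})
    (γ : ℝ) (hγ : 0 < γ)
    (hreg : ∀ c : ℝ, 0 < c → Tendsto (fun t : ℝ =>
        (ℙ {ω | c * t < I ω}).toReal / (ℙ {ω | t < I ω}).toReal) atTop
        (nhds (c ^ (-γ))))
    (f : ℝ → ℝ) (hf : Measurable f) (hf_pos : ∀ s : ℝ, 0 < s → 0 < f s)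
    (hf0 : Tendsto (fun s => f s / s) (nhdsWithin 0 (Ioi 0)) (nhds 0))
    (β : ℝ) (hβ : 0 < β) (l : ℝ) (hl : 0 < l) :
    (∫⁻ s in Ioc (0 : ℝ) l,
        ℙ {ω | s / f s < I ω} * ENNReal.ofReal s⁻¹ < ⊤) ↔
    (∫⁻ s in Ioc (0 : ℝ) l,
        ℙ {ω | β * s / f s < I ω} * ENNReal.ofReal s⁻¹ < ⊤) := by
  constructor
  · exact regular_case_aux ℙ I hpos γ hreg f hf_pos hf0 β hβ l hl
  · intro h
    set f' : ℝ → ℝ := fun s => f s / β with hf'def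
    have hf'_pos : ∀ s : ℝ, 0 < s → 0 < f' s := fun s hs => div_pos (hf_pos s hs) hβ
    have hf'0 : Tendsto (fun s => f' s / s) (nhdsWithin 0 (Ioi 0)) (nhds 0) := by
      have := hf0.div_const β
      rw [zero_div] at this
      refine this.congr fun s => ?_
      simp [hf'def, div_div, mul_comm]
    have key1 : ∀ s : ℝ, s / f' s = β * s / f s := by
      intro s
      rw [hf'def, div_div_eq_mul_div, mul_comm]
    have key2 : ∀ s : ℝ, β⁻¹ * s / f' s = s / f s := by
      intro s
      rw [hf'def, div_div_eq_mul_div, mul_right_comm, inv_mul_cancel₀ hβ.ne', one_mul]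
    have h' : ∫⁻ s in Ioc (0 : ℝ) l,
        ℙ {ω | s / f' s < I ω} * ENNReal.ofReal s⁻¹ < ⊤ := by
      simpa only [key1] using h
    have := regular_case_aux ℙ I hpos γ hreg f' hf'_pos hf'0 β⁻¹ (inv_pos.mpr hβ) l hl h'
    simpa only [key2] using this
end

section
/- Let I be a nonnegative real random variable with P(I > t) > 0 for every t > 0 and whose tail is regularly varying of index −γ for some γ > 0 in the ratio sense: for every c > 0, P(I > ct)/P(I > t) → c^{−γ} as t → +∞. Let f : (0,∞) → (0,∞) be Borel measurable with f(t)/t → 0 as t → +∞, and let β > 0 and λ > 0. Then ∫_λ^∞ P(s/f(s) < I) · s^{−1} ds < ∞ if and only if ∫_λ^∞ P(β·s/f(s) < I) · s^{−1} ds < ∞. -/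
open MeasureTheory Filter Set

/-- In the regular case, for `f` with `f(t)/t → 0` as `t → +∞` and any `β > 0`,
`∫_λ^∞ P(s/f(s) < I) s⁻¹ ds < ∞` iff `∫_λ^∞ P(βs/f(s) < I) s⁻¹ ds < ∞`. -/
theorem regular_case_equivalence_at_infinity
    {Ω : Type*} [MeasurableSpace Ω] (ℙ : Measure Ω) [IsProbabilityMeasure ℙ]
    (I : Ω → ℝ) (hI : Measurable I) (hI_nn : ∀ ω, 0 ≤ I ω)
    (hpos : ∀ t : ℝ, 0 < t → 0 < ℙ {ω | t < I ω})
    (γ : ℝ) (hγ : 0 < γ)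
    (hreg : ∀ c : ℝ, 0 < c → Tendsto (fun t : ℝ =>
        (ℙ {ω | c * t < I ω}).toReal / (ℙ {ω | t < I ω}).toReal) atTop
        (nhds (c ^ (-γ))))
    (f : ℝ → ℝ) (hf : Measurable f) (hf_pos : ∀ s : ℝ, 0 < s → 0 < f s)
    (hf0 : Tendsto (fun t => f t / t) atTop (nhds 0))
    (β : ℝ) (hβ : 0 < β) (l : ℝ) (hl : 0 < l) :
    (∫⁻ s in Ioi l, ℙ {ω | s / f s < I ω} * ENNReal.ofReal s⁻¹ < ⊤) ↔
    (∫⁻ s in Ioi l, ℙ {ω | β * s / f s < I ω} * ENNReal.ofReal s⁻¹ < ⊤) := by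
  have pne : ∀ t : ℝ, ℙ {ω | t < I ω} ≠ ⊤ := fun t => measure_ne_top ℙ _
  have key : ∀ (u : ℝ → ℝ), Tendsto u atTop atTop → ∀ c : ℝ, 0 < c →
      (∫⁻ s in Ioi l, ℙ {ω | u s < I ω} * ENNReal.ofReal s⁻¹ < ⊤) →
      (∫⁻ s in Ioi l, ℙ {ω | c * u s < I ω} * ENNReal.ofReal s⁻¹ < ⊤) := by
    intro u hu c hc hfin
    set K : ENNReal := ENNReal.ofReal (c ^ (-γ) + 1) with hKdef
    have hKne : K ≠ ⊤ := ENNReal.ofReal_ne_top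
    have hcγ : (0:ℝ) < c ^ (-γ) + 1 := by positivity
    have hev : ∀ᶠ t : ℝ in atTop, ℙ {ω | c * t < I ω} ≤ K * ℙ {ω | t < I ω} := by
      have h1 : ∀ᶠ t : ℝ in atTop,
          (ℙ {ω | c * t < I ω}).toReal / (ℙ {ω | t < I ω}).toReal < c ^ (-γ) + 1 :=
        (hreg c hc).eventually_lt_const (by linarith)
      filter_upwards [h1, eventually_gt_atTop (0:ℝ)] with t h1 ht
      have hp : 0 < (ℙ {ω | t < I ω}).toReal :=
        ENNReal.toReal_pos (hpos t ht).ne' (pne t)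
      have h2 : (ℙ {ω | c * t < I ω}).toReal ≤ (c ^ (-γ) + 1) * (ℙ {ω | t < I ω}).toReal :=
        le_of_lt ((div_lt_iff₀ hp).mp h1)
      calc ℙ {ω | c * t < I ω} = ENNReal.ofReal (ℙ {ω | c * t < I ω}).toReal :=
              (ENNReal.ofReal_toReal (pne _)).symm
        _ ≤ ENNReal.ofReal ((c ^ (-γ) + 1) * (ℙ {ω | t < I ω}).toReal) :=
              ENNReal.ofReal_le_ofReal h2
        _ = K * ℙ {ω | t < I ω} := by
              rw [ENNReal.ofReal_mul hcγ.le, ENNReal.ofReal_toReal (pne _)]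
    obtain ⟨S, hS⟩ := eventually_atTop.mp (hu.eventually hev)
    set T := max S l with hT
    have hTl : l ≤ T := le_max_right _ _
    have hsplit : ∫⁻ s in Ioi l, ℙ {ω | c * u s < I ω} * ENNReal.ofReal s⁻¹ ≤
        (∫⁻ s in Ioc l T, ℙ {ω | c * u s < I ω} * ENNReal.ofReal s⁻¹) +
        ∫⁻ s in Ioi T, ℙ {ω | c * u s < I ω} * ENNReal.ofReal s⁻¹ := by
      refine le_trans (lintegral_mono_set ?_) (lintegral_union_le _ _ _)
      intro s hs
      rcases le_or_gt s T with h | h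
      · exact Or.inl ⟨hs, h⟩
      · exact Or.inr h
    have h1 : (∫⁻ s in Ioc l T, ℙ {ω | c * u s < I ω} * ENNReal.ofReal s⁻¹) < ⊤ := by
      have : (∫⁻ s in Ioc l T, ℙ {ω | c * u s < I ω} * ENNReal.ofReal s⁻¹) ≤
          ∫⁻ _ in Ioc l T, ENNReal.ofReal l⁻¹ := by
        refine setLIntegral_mono' measurableSet_Ioc fun s hs => ?_
        calc ℙ {ω | c * u s < I ω} * ENNReal.ofReal s⁻¹ ≤ 1 * ENNReal.ofReal l⁻¹ := by
              gcongr
              · exact prob_le_one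
              · exact hs.1.le
          _ = ENNReal.ofReal l⁻¹ := one_mul _
      refine lt_of_le_of_lt this ?_
      rw [setLIntegral_const]
      exact ENNReal.mul_lt_top ENNReal.ofReal_lt_top (by simp)
    have h2 : (∫⁻ s in Ioi T, ℙ {ω | c * u s < I ω} * ENNReal.ofReal s⁻¹) < ⊤ := by
      have hb : (∫⁻ s in Ioi T, ℙ {ω | c * u s < I ω} * ENNReal.ofReal s⁻¹) ≤
          K * ∫⁻ s in Ioi T, ℙ {ω | u s < I ω} * ENNReal.ofReal s⁻¹ := by
        rw [← lintegral_const_mul' _ _ hKne]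
        refine setLIntegral_mono' measurableSet_Ioi fun s hs => ?_
        rw [← mul_assoc]
        gcongr
        exact hS s (le_trans (le_max_left _ _) (le_of_lt hs))
      refine lt_of_le_of_lt hb ?_
      exact ENNReal.mul_lt_top hKne.lt_top
        (lt_of_le_of_lt (lintegral_mono_set (Ioi_subset_Ioi hTl)) hfin)
    exact lt_of_le_of_lt hsplit (ENNReal.add_lt_top.mpr ⟨h1, h2⟩)
  have hu : Tendsto (fun s => s / f s) atTop atTop := by
    have hpos' : ∀ᶠ s : ℝ in atTop, f s / s ∈ Ioi (0:ℝ) := by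
      filter_upwards [eventually_gt_atTop (0:ℝ)] with s hs
      exact div_pos (hf_pos s hs) hs
    have : Tendsto (fun s => f s / s) atTop (nhdsWithin 0 (Ioi 0)) :=
      tendsto_nhdsWithin_of_tendsto_nhds_of_eventually_within _ hf0 hpos'
    have := this.inv_tendsto_nhdsGT_zero
    refine this.congr fun s => ?_
    simp [inv_div]
  constructor
  · intro h
    have := key (fun s => s / f s) hu β hβ h
    simpa [mul_div_assoc] using this
  · intro h
    have hu2 : Tendsto (fun s => β * s / f s) atTop atTop := by
      have := hu.const_mul_atTop hβ
      refine this.congr fun s => ?_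
      ring
    have := key (fun s => β * s / f s) hu2 β⁻¹ (inv_pos.mpr hβ) h
    refine lt_of_le_of_lt (lintegral_mono fun s => ?_) this
    gcongr
    exact (show β⁻¹ * (β * s / f s) = s / f s by field_simp).le
end
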